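/- arXiv:2504.00571 — 5 statements merged into one kernel-verified Lean document; each statement's English description precedes it below -/
import Mathlib

section
/- For a finite cyclic group C_n of order n and an element x of order d dividing n, the number of vertices adjacent to x in the power graph of C_n equals d + (sum over divisors e of n/d of φ(n/e)) − φ(d) − 1, where φ is Euler's totient function. -/
/-- The power graph of a group: distinct vertices are adjacent iff
one is a power of the other. -/
def powerGraph (G : Type*) [Group G] : SimpleGraph G where
  Adj x y := x ≠ y ∧ (x ∈ Subgroup.zpowers y ∨ y ∈ Subgroup.zpowers x)
  symm := ⟨fun x y ⟨h1, h2⟩ => ⟨h1.symm, h2.symm⟩⟩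
  loopless := ⟨fun x ⟨h, _⟩ => h rfl⟩

/-- `v` lies in a connected component containing a cycle. -/
def InCyclicComp {V : Type*} (Γ : SimpleGraph V) (v : V) : Prop :=
  ∃ w, Γ.Reachable v w ∧ ∃ c : Γ.Walk w w, c.IsCycle

/-- `S` is a cyclic vertex cutset: `Γ - S` is disconnected with at least two
components containing cycles. -/
def IsCyclicCutset {V : Type*} (Γ : SimpleGraph V) (S : Set V) : Prop :=
  ∃ u v : ↥(Sᶜ), ¬ (Γ.induce Sᶜ).Reachable u v ∧
    InCyclicComp (Γ.induce Sᶜ) u ∧ InCyclicComp (Γ.induce Sᶜ) v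

/-- A graph is cyclically separable if it has a cyclic vertex cutset. -/
def CyclicallySeparable {V : Type*} (Γ : SimpleGraph V) : Prop :=
  ∃ S : Set V, IsCyclicCutset Γ S

/-- Vertex connectivity: the least number of vertices whose deletion
disconnects the graph or reduces it to at most one vertex. -/
noncomputable def vertexConn {V : Type*} (Γ : SimpleGraph V) : ℕ :=
  sInf {k | ∃ S : Set V, S.ncard = k ∧
    (¬ (Γ.induce Sᶜ).Connected ∨ Sᶜ.Subsingleton)}

/-- Cyclic vertex connectivity: the least cardinality of a cyclic vertex
cutset, `∞` if there is none. -/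
noncomputable def cyclicVertexConn {V : Type*} (Γ : SimpleGraph V) : ℕ∞ :=
  sInf {k : ℕ∞ | ∃ S : Set V, IsCyclicCutset Γ S ∧ k = (S.ncard : ℕ∞)}

/-- `genClass x` is `[x]`, the set of generators of `⟨x⟩`. -/
def genClass {G : Type*} [Group G] (x : G) : Set G :=
  {y | Subgroup.zpowers y = Subgroup.zpowers x}

/-- Neighbourhood of a set of vertices. -/
def setNbhd {V : Type*} (Γ : SimpleGraph V) (A : Set V) : Set V :=
  {v | v ∉ A ∧ ∃ a ∈ A, Γ.Adj v a}

open Subgroup Finset in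
lemma mem_zpowers_iff_orderOf_dvd {G : Type*} [Group G] [Fintype G] [IsCyclic G]
    (x z : G) : x ∈ Subgroup.zpowers z ↔ orderOf x ∣ orderOf z := by
  classical
  constructor
  · exact orderOf_dvd_of_mem_zpowers
  · intro hdvd
    set d := orderOf x with hd
    set m := orderOf z with hm
    have hd0 : 0 < d := orderOf_pos x
    have hm0 : 0 < m := orderOf_pos z
    -- the set of solutions of y^d = 1 equals zpowers x
    have hsub : (Subgroup.zpowers x : Set G).toFinset ⊆ Finset.univ.filter (fun a => a ^ d = 1) := by
      intro a ha
      rw [Set.mem_toFinset] at ha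
      rw [Finset.mem_filter]
      exact ⟨Finset.mem_univ _, orderOf_dvd_iff_pow_eq_one.mp (orderOf_dvd_of_mem_zpowers ha)⟩
    have hcardx : ((Subgroup.zpowers x : Set G).toFinset).card = d := by
      rw [Set.toFinset_card]; exact Fintype.card_zpowers
    have hcardS : (Finset.univ.filter (fun a : G => a ^ d = 1)).card ≤ d := by
      simpa using IsCyclic.card_pow_eq_one_le (α := G) hd0
    have hSeq : (Subgroup.zpowers x : Set G).toFinset = Finset.univ.filter (fun a : G => a ^ d = 1) :=
      Finset.eq_of_subset_of_card_le hsub (by rw [hcardx]; exact hcardS)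
    set w := z ^ (m / d) with hw
    have hwd : w ^ d = 1 := by
      rw [hw, ← pow_mul, Nat.div_mul_cancel hdvd, hm, pow_orderOf_eq_one]
    have hwx : w ∈ Subgroup.zpowers x := by
      have : w ∈ (Subgroup.zpowers x : Set G).toFinset := by
        rw [hSeq, Finset.mem_filter]; exact ⟨Finset.mem_univ _, hwd⟩
      simpa [Set.mem_toFinset] using this
    have hworder : orderOf w = d := by
      rw [hw, orderOf_pow, ← hm, Nat.gcd_eq_right (Nat.div_dvd_of_dvd hdvd),
        Nat.div_div_self hdvd hm0.ne']
    have hzw : Subgroup.zpowers w = Subgroup.zpowers x := by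
      apply Subgroup.eq_of_le_of_card_ge (Subgroup.zpowers_le.mpr hwx)
      rw [Nat.card_zpowers, Nat.card_zpowers, hworder]
    have hxw : x ∈ Subgroup.zpowers w := by rw [hzw]; exact Subgroup.mem_zpowers x
    have hwz : Subgroup.zpowers w ≤ Subgroup.zpowers z :=
      Subgroup.zpowers_le.mpr (Subgroup.pow_mem _ (Subgroup.mem_zpowers z) _)
    exact hwz hxw

/-- Degree formula in the power graph of the cyclic group of order n. -/
theorem stmt0 (n : ℕ) [NeZero n] (x : Multiplicative (ZMod n)) (d : ℕ)
    (hd : orderOf x = d) :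
    ((powerGraph (Multiplicative (ZMod n))).neighborSet x).ncard
      = d + (∑ e ∈ (n / d).divisors, Nat.totient (n / e)) - Nat.totient d - 1 := by
  classical
  subst hd
  set d := orderOf x with hd
  have hcard : Fintype.card (Multiplicative (ZMod n)) = n := by
    rw [Fintype.card_multiplicative, ZMod.card]
  have hn0 : n ≠ 0 := NeZero.ne n
  have hdn : d ∣ n := orderOf_dvd_card.trans (dvd_of_eq hcard)
  have hd0 : 0 < d := orderOf_pos x
  set A : Finset (Multiplicative (ZMod n)) := Finset.univ.filter (fun z => orderOf z ∣ d) with hA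
  set B : Finset (Multiplicative (ZMod n)) := Finset.univ.filter (fun z => d ∣ orderOf z) with hB
  have hN : ((powerGraph (Multiplicative (ZMod n))).neighborSet x) = ↑((A ∪ B).erase x) := by
    ext z
    simp only [SimpleGraph.mem_neighborSet, powerGraph, Finset.coe_erase, Set.mem_diff,
      Finset.coe_union, Set.mem_union, Finset.coe_filter, Finset.mem_univ, true_and,
      Set.mem_setOf_eq, Set.mem_singleton_iff, hA, hB]
    rw [mem_zpowers_iff_orderOf_dvd, mem_zpowers_iff_orderOf_dvd]
    constructor
    · rintro ⟨h1, h2⟩; exact ⟨h2.symm, fun e => h1 e.symm⟩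
    · rintro ⟨h1, h2⟩; exact ⟨fun e => h2 e.symm, h1.symm⟩
  have hxA : x ∈ A ∪ B := Finset.mem_union_left _ (by simp [hA]; exact dvd_rfl)
  have hAcard : A.card = d := by
    have : A = (Subgroup.zpowers x : Set (Multiplicative (ZMod n))).toFinset := by
      ext z
      simp [hA, Set.mem_toFinset, mem_zpowers_iff_orderOf_dvd]; exact Iff.rfl
    rw [this, Set.toFinset_card]
    exact Fintype.card_zpowers
  have hABcard : (A ∩ B).card = Nat.totient d := by
    have h2 : A ∩ B = Finset.univ.filter (fun z : Multiplicative (ZMod n) => orderOf z = d) := by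
      ext z
      simp only [Finset.mem_inter, hA, hB, Finset.mem_filter, Finset.mem_univ, true_and]
      exact ⟨fun ⟨h1, h2⟩ => Nat.dvd_antisymm h1 h2, fun h => ⟨h ▸ dvd_rfl, h ▸ dvd_rfl⟩⟩
    rw [h2]
    have := IsCyclic.card_orderOf_eq_totient (α := Multiplicative (ZMod n)) (d := d)
      (by rw [hcard]; exact hdn)
    convert this using 2
  have hBcard : B.card = ∑ e ∈ (n / d).divisors, Nat.totient (n / e) := by
    have hBeq : B = (n.divisors.filter (fun m => d ∣ m)).biUnion
        (fun m => Finset.univ.filter (fun z : Multiplicative (ZMod n) => orderOf z = m)) := by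
      ext z
      simp only [hB, Finset.mem_filter, Finset.mem_univ, true_and, Finset.mem_biUnion,
        Nat.mem_divisors]
      constructor
      · intro h
        exact ⟨orderOf z, ⟨⟨(orderOf_dvd_card.trans (dvd_of_eq hcard)), hn0⟩, h⟩, rfl⟩
      · rintro ⟨m, ⟨_, hm⟩, rfl⟩
        exact hm
    rw [hBeq, Finset.card_biUnion]
    · have h1 : ∀ m ∈ n.divisors.filter (fun m => d ∣ m),
          (Finset.univ.filter (fun z : Multiplicative (ZMod n) => orderOf z = m)).card
            = Nat.totient m := by
        intro m hm
        rw [Finset.mem_filter, Nat.mem_divisors] at hm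
        have := IsCyclic.card_orderOf_eq_totient (α := Multiplicative (ZMod n)) (d := m)
          (by rw [hcard]; exact hm.1.1)
        convert this using 2
      rw [Finset.sum_congr rfl h1]
      refine (Finset.sum_nbij' (fun e => n / e) (fun m => n / m) ?_ ?_ ?_ ?_ ?_).symm
      · intro e he
        rw [Nat.mem_divisors] at he
        have hen : e ∣ n := he.1.trans (Nat.div_dvd_of_dvd hdn)
        rw [Finset.mem_filter, Nat.mem_divisors]
        refine ⟨⟨Nat.div_dvd_of_dvd hen, hn0⟩, ?_⟩
        rw [Nat.dvd_div_iff_mul_dvd hen]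
        calc e * d = d * e := mul_comm _ _
          _ ∣ d * (n / d) := mul_dvd_mul_left d he.1
          _ = n := Nat.mul_div_cancel' hdn
      · intro m hm
        rw [Finset.mem_filter, Nat.mem_divisors] at hm
        obtain ⟨⟨hmn, -⟩, hdm⟩ := hm
        rw [Nat.mem_divisors]
        constructor
        · rw [Nat.dvd_div_iff_mul_dvd hdn]
          calc d * (n / m) ∣ m * (n / m) := mul_dvd_mul_right hdm _
            _ = n := Nat.mul_div_cancel' hmn
        · exact (Nat.div_pos (Nat.le_of_dvd (Nat.pos_of_ne_zero hn0) hdn) hd0).ne'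
      · intro e he
        rw [Nat.mem_divisors] at he
        exact Nat.div_div_self (he.1.trans (Nat.div_dvd_of_dvd hdn)) hn0
      · intro m hm
        rw [Finset.mem_filter, Nat.mem_divisors] at hm
        exact Nat.div_div_self hm.1.1 hn0
      · intro e he; rfl
    · intro a ha b hb hab
      simp only [Finset.disjoint_left, Finset.mem_filter, Finset.mem_univ, true_and]
      rintro z rfl h2
      exact hab h2
  rw [hN, Set.ncard_coe_finset, Finset.card_erase_of_mem hxA]
  have hie := Finset.card_union_add_card_inter A B
  rw [hAcard, hABcard, hBcard] at hie
  omega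
end

section
/- Let n have at least three distinct prime factors p_1 < p_2 < p_3 ≤ ... . Then the power graph of C_n is cyclically separable: removing all vertices outside H_{p_1p_2}^* ∪ O_{p_3} disconnects the graph into (at least) two components each containing a cycle, namely the clique induced by the nonidentity elements of the subgroup of order p_1p_2 (of size p_1p_2 − 1 ≥ 5) and the clique induced by the elements of order p_3 (of size p_3 − 1 ≥ 4). -/
lemma triangle_cycle {V : Type*} {Γ : SimpleGraph V} {a b c : V}
    (hab : Γ.Adj a b) (hbc : Γ.Adj b c) (hca : Γ.Adj c a) (hac : a ≠ c) :
    ∃ w : Γ.Walk a a, w.IsCycle := by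
  refine ⟨.cons hab (.cons hbc (.cons hca .nil)), ?_⟩
  rw [SimpleGraph.Walk.isCycle_def]
  refine ⟨⟨?_⟩, by simp, ?_⟩
  · simp [SimpleGraph.Walk.edges, Sym2.eq, Sym2.rel_iff', hab.ne, hbc.ne, hca.ne, hac, Ne.symm hac,
      Ne.symm hab.ne, Ne.symm hbc.ne, Ne.symm hca.ne]
  · simp [hab.ne, hbc.ne, hac, Ne.symm hac, Ne.symm hab.ne, Ne.symm hbc.ne]

lemma walk_invariant {V : Type*} {Γ : SimpleGraph V} (P : V → Prop)
    (hP : ∀ x y, Γ.Adj x y → P x → P y) {u v : V} (p : Γ.Walk u v) (hu : P u) : P v := by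
  induction p with
  | nil => exact hu
  | cons h p ih => exact ih (hP _ _ h hu)

lemma exists_order (n : ℕ) [NeZero n] (d : ℕ) (hd : d ∣ n) :
    ∃ z : Multiplicative (ZMod n), orderOf z = d := by
  obtain ⟨g, hg⟩ := IsCyclic.exists_ofOrder_eq_natCard (α := Multiplicative (ZMod n))
  have hcard : Nat.card (Multiplicative (ZMod n)) = n := by simp [Nat.card_zmod]
  rw [hcard] at hg
  refine ⟨g ^ (n / d), ?_⟩
  have := orderOf_pow_orderOf_div (x := g) (n := d) (by rw [hg]; exact NeZero.ne n)
    (by rw [hg]; exact hd)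
  rwa [hg] at this

/-- If n has at least three distinct prime factors then the power graph of C_n
is cyclically separable, witnessed by the complement of
H_{p₁p₂}^* ∪ O_{p₃}. -/
theorem stmt7 (n p₁ p₂ p₃ : ℕ) [NeZero n]
    (hp₁ : p₁.Prime) (hp₂ : p₂.Prime) (hp₃ : p₃.Prime)
    (h12 : p₁ < p₂) (h23 : p₂ < p₃)
    (hd₁ : p₁ ∣ n) (hd₂ : p₂ ∣ n) (hd₃ : p₃ ∣ n) :
    IsCyclicCutset (powerGraph (Multiplicative (ZMod n)))
      (({x : Multiplicative (ZMod n) | x ^ (p₁ * p₂) = 1 ∧ x ≠ 1} ∪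
        {x : Multiplicative (ZMod n) | orderOf x = p₃})ᶜ) ∧
    CyclicallySeparable (powerGraph (Multiplicative (ZMod n))) := by
  set G := Multiplicative (ZMod n)
  set A : Set G := {x : G | x ^ (p₁ * p₂) = 1 ∧ x ≠ 1} ∪ {x : G | orderOf x = p₃} with hA
  -- numeric facts
  have hp1pos : 0 < p₁ := hp₁.pos
  have hp2pos : 0 < p₂ := hp₂.pos
  have h2p1 : 2 ≤ p₁ := hp₁.two_le
  have h3p2 : 3 ≤ p₂ := by omega
  have h5p3 : 5 ≤ p₃ := by
    obtain ⟨k, hk⟩ := hp₃.odd_of_ne_two (by omega)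
    omega
  have h6 : 6 ≤ p₁ * p₂ := by calc 6 = 2 * 3 := rfl
                                   _ ≤ p₁ * p₂ := Nat.mul_le_mul h2p1 h3p2
  have hnd3 : ¬ p₃ ∣ p₁ * p₂ := by
    intro h
    rcases (Nat.Prime.dvd_mul hp₃).mp h with h | h
    · exact absurd ((Nat.prime_dvd_prime_iff_eq hp₃ hp₁).mp h) (by omega)
    · exact absurd ((Nat.prime_dvd_prime_iff_eq hp₃ hp₂).mp h) (by omega)
  -- elements of given orders
  obtain ⟨z, hz⟩ := exists_order n (p₁ * p₂)
    ((Nat.coprime_primes hp₁ hp₂).mpr h12.ne |>.mul_dvd_of_dvd_of_dvd hd₁ hd₂)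
  obtain ⟨w, hw⟩ := exists_order n p₃ hd₃
  -- helper for membership in A via order dividing p₁p₂
  have memB : ∀ x : G, orderOf x ∣ p₁ * p₂ → x ≠ 1 → x ∈ A :=
    fun x h hne => Or.inl ⟨orderOf_dvd_iff_pow_eq_one.mp h, hne⟩
  have hne_of_ord : ∀ x : G, orderOf x ≠ 1 → x ≠ 1 := by
    intro x h hx; rw [hx, orderOf_one] at h; exact h rfl
  -- facts about z, z⁻¹, z^p₁
  have hzinv : orderOf z⁻¹ = p₁ * p₂ := by rw [orderOf_inv, hz]
  have hzp1 : orderOf (z ^ p₁) = p₂ := by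
    rw [orderOf_pow, hz, Nat.gcd_eq_right ⟨p₂, rfl⟩, Nat.mul_div_cancel_left _ hp1pos]
  have hzA : z ∈ A := memB z (hz ▸ dvd_refl _) (hne_of_ord z (by omega))
  have hzinvA : z⁻¹ ∈ A := memB _ (hzinv ▸ dvd_refl _) (hne_of_ord _ (by rw [hzinv]; omega))
  have hzp1A : z ^ p₁ ∈ A := memB _ (by rw [hzp1]; exact dvd_mul_left p₂ p₁)
    (hne_of_ord _ (by rw [hzp1]; omega))
  -- facts about w, w⁻¹, w^2
  have hwinv : orderOf w⁻¹ = p₃ := by rw [orderOf_inv, hw]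
  have hw2 : orderOf (w ^ 2) = p₃ := by
    rw [Nat.Coprime.orderOf_pow (by rw [hw]; exact (Nat.coprime_primes hp₃ Nat.prime_two).mpr (by omega)), hw]
  have hwA : w ∈ A := Or.inr hw
  have hwinvA : w⁻¹ ∈ A := Or.inr hwinv
  have hw2A : w ^ 2 ∈ A := Or.inr hw2
  -- distinctness
  have hzne : z ≠ z⁻¹ := by
    intro h
    have h2 : z ^ 2 = 1 := by rw [sq]; nth_rewrite 2 [h]; exact mul_inv_cancel z
    have := Nat.le_of_dvd (by norm_num) (hz ▸ orderOf_dvd_iff_pow_eq_one.mpr h2)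
    omega
  have hzne2 : z ≠ z ^ p₁ := by
    intro h
    have : p₁ * p₂ = p₂ := by rw [← hz, ← hzp1, ← h]
    have := hp₁.one_lt; nlinarith
  have hzne3 : z⁻¹ ≠ z ^ p₁ := by
    intro h
    have : p₁ * p₂ = p₂ := by rw [← hzinv, ← hzp1, ← h]
    have := hp₁.one_lt; nlinarith
  have hwne : w ≠ w⁻¹ := by
    intro h
    have h2 : w ^ 2 = 1 := by rw [sq]; nth_rewrite 2 [h]; exact mul_inv_cancel w
    have := Nat.le_of_dvd (by norm_num) (hw ▸ orderOf_dvd_iff_pow_eq_one.mpr h2)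
    omega
  have hwne2 : w ≠ w ^ 2 := by
    intro h
    have h1 : w * 1 = w * w := by rw [mul_one]; nth_rewrite 1 [h]; rw [sq]
    have : (1 : G) = w := mul_left_cancel h1
    rw [← this, orderOf_one] at hw; omega
  have hwne3 : w⁻¹ ≠ w ^ 2 := by
    intro h
    have h3 : w ^ 3 = 1 := by
      have : w ^ 2 * w = w⁻¹ * w := by rw [h]
      rw [inv_mul_cancel, ← pow_succ] at this; exact this
    have := Nat.le_of_dvd (by norm_num) (hw ▸ orderOf_dvd_iff_pow_eq_one.mpr h3)
    omega
  -- the goal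
  rw [hA]
  have mem' : ∀ {x : G}, x ∈ A → x ∈ Aᶜᶜ := fun h hc => hc h
  have mem'' : ∀ {x : G}, x ∈ Aᶜᶜ → x ∈ A := fun h => not_not.mp h
  have main : IsCyclicCutset (powerGraph G) Aᶜ := by
    refine ⟨⟨z, mem' hzA⟩, ⟨w, mem' hwA⟩, ?_, ?_, ?_⟩
    · -- non-reachability
      intro ⟨p⟩
      have hP := walk_invariant (Γ := (powerGraph G).induce Aᶜᶜ)
        (P := fun x => (x : G) ^ (p₁ * p₂) = 1) ?_ p
        (by rw [← hz]; exact pow_orderOf_eq_one z)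
      · exact hnd3 (hw ▸ orderOf_dvd_iff_pow_eq_one.mpr hP)
      · rintro ⟨x, hx'⟩ ⟨y, hy'⟩ hadj hpx
        have hx := mem'' hx'
        have hy := mem'' hy'
        obtain ⟨hne, hor⟩ := hadj
        have hxne1 : x ≠ 1 := by
          rcases hx with h | h
          · exact h.2
          · exact absurd (hnd3 ((h : orderOf x = p₃) ▸ orderOf_dvd_iff_pow_eq_one.mpr hpx)) not_false
        have hxdvd : orderOf x ∣ p₁ * p₂ := orderOf_dvd_iff_pow_eq_one.mpr hpx
        rcases hy with h | h
        · exact h.1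
        · exfalso
          have hyord : orderOf y = p₃ := h
          rcases hor with hm | hm
          · have := orderOf_dvd_of_mem_zpowers hm
            simp only [Function.Embedding.coe_subtype] at this
            rw [hyord] at this
            rcases (Nat.Prime.eq_one_or_self_of_dvd hp₃ _ this).symm.imp id id with h1 | h1
            · exact hnd3 (h1 ▸ hxdvd)
            · exact hxne1 (orderOf_eq_one_iff.mp h1)
          · have := orderOf_dvd_of_mem_zpowers hm
            simp only [Function.Embedding.coe_subtype] at this
            rw [hyord] at this
            exact hnd3 (dvd_trans this hxdvd)
    · -- cycle at z
      refine ⟨_, SimpleGraph.Reachable.refl _, ?_⟩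
      refine triangle_cycle (b := ⟨z⁻¹, mem' hzinvA⟩) (c := ⟨z ^ p₁, mem' hzp1A⟩) ?_ ?_ ?_ ?_
      · exact ⟨fun h => hzne h,
          Or.inl ⟨-1, by simp; exact inv_inv _⟩⟩
      · exact ⟨fun h => hzne3 h,
          Or.inr ⟨-(p₁ : ℤ), by simp; exact inv_inv (z ^ p₁ : Multiplicative (ZMod n))⟩⟩
      · exact ⟨fun h => hzne2 h.symm,
          Or.inl ⟨(p₁ : ℤ), by simp⟩⟩
      · exact fun h => hzne2 (congrArg Subtype.val h)
    · -- cycle at w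
      refine ⟨_, SimpleGraph.Reachable.refl _, ?_⟩
      refine triangle_cycle (b := ⟨w⁻¹, mem' hwinvA⟩) (c := ⟨w ^ 2, mem' hw2A⟩) ?_ ?_ ?_ ?_
      · exact ⟨fun h => hwne h,
          Or.inl ⟨-1, by simp; exact inv_inv (w : Multiplicative (ZMod n))⟩⟩
      · exact ⟨fun h => hwne3 h,
          Or.inr ⟨-(2 : ℤ), by simp [zpow_ofNat]; exact inv_inv (w ^ 2 : Multiplicative (ZMod n))⟩⟩
      · exact ⟨fun h => hwne2 h.symm,
          Or.inl ⟨(2 : ℤ), by simp [zpow_ofNat]⟩⟩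
      · exact fun h => hwne2 (congrArg Subtype.val h)
  exact ⟨main, ⟨Aᶜ, main⟩⟩
end

section
/- Let n = p_1p_2 with primes p_1 < p_2 and p_1 ∈ {2,3}. Then in the power graph of C_n, after deleting the identity and all generators, the remaining graph is the disjoint union of two cliques of sizes p_1 − 1 and p_2 − 1, and since p_1 − 1 ≤ 2 the power graph of C_n has no cyclic vertex cutset. -/
lemma aux_mem_zpowers {G : Type*} [Group G] [Fintype G] [IsCyclic G] [DecidableEq G]
    {x y : G} {p : ℕ} (hp : 0 < p) (hx : orderOf x = p) (hy : orderOf y = p) :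
    x ∈ Subgroup.zpowers y := by
  have hyp : y ^ p = 1 := by rw [← hy]; exact pow_orderOf_eq_one y
  have hsub : (Subgroup.zpowers y : Set G) ⊆ {b : G | b ^ p = 1} := by
    rintro z ⟨k, rfl⟩
    show (y ^ k) ^ p = 1
    rw [← zpow_natCast, ← zpow_mul, mul_comm, zpow_mul, zpow_natCast, hyp, one_zpow]
  have hcard : ({b : G | b ^ p = 1}).ncard ≤ p := by
    rw [Set.ncard_eq_toFinset_card', Set.toFinset_setOf]
    exact IsCyclic.card_pow_eq_one_le hp
  have hA : (Subgroup.zpowers y : Set G).ncard = p := by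
    rw [← Nat.card_coe_set_eq]
    exact (Nat.card_zpowers y).trans hy
  have heq := Set.eq_of_subset_of_ncard_le hsub (by rw [hA]; exact hcard) (Set.toFinite _)
  have hx' : x ∈ {b : G | b ^ p = 1} := by
    show x ^ p = 1
    rw [← hx]; exact pow_orderOf_eq_one x
  rw [← heq] at hx'
  exact hx'

lemma aux_ncard_orderOf {G : Type*} [Group G] [Fintype G] [IsCyclic G] [DecidableEq G]
    {d : ℕ} (hd : d ∣ Fintype.card G) :
    {x : G | orderOf x = d}.ncard = d.totient := by
  rw [Set.ncard_eq_toFinset_card', Set.toFinset_setOf]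
  exact IsCyclic.card_orderOf_eq_totient hd

/-- For n = p₁p₂ with p₁ ∈ {2,3}, deleting the identity and the generators
leaves two cliques of sizes p₁ - 1 and p₂ - 1 with no edges between them, and
the power graph has no cyclic vertex cutset. -/
theorem stmt9 (p₁ p₂ n : ℕ) (hp₁ : p₁.Prime) (hp₂ : p₂.Prime) (hlt : p₁ < p₂)
    (hsmall : p₁ = 2 ∨ p₁ = 3) (hn : n = p₁ * p₂) [NeZero n] :
    ({x : Multiplicative (ZMod n) | orderOf x = n ∨ x = 1}ᶜ
        = {x : Multiplicative (ZMod n) | orderOf x = p₁} ∪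
          {x : Multiplicative (ZMod n) | orderOf x = p₂}) ∧
    (powerGraph (Multiplicative (ZMod n))).IsClique
      {x : Multiplicative (ZMod n) | orderOf x = p₁} ∧
    (powerGraph (Multiplicative (ZMod n))).IsClique
      {x : Multiplicative (ZMod n) | orderOf x = p₂} ∧
    {x : Multiplicative (ZMod n) | orderOf x = p₁}.ncard = p₁ - 1 ∧
    {x : Multiplicative (ZMod n) | orderOf x = p₂}.ncard = p₂ - 1 ∧
    (∀ a b : Multiplicative (ZMod n), orderOf a = p₁ → orderOf b = p₂ →
      ¬ (powerGraph (Multiplicative (ZMod n))).Adj a b) ∧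
    ¬ CyclicallySeparable (powerGraph (Multiplicative (ZMod n))) := by
  classical
  set G := Multiplicative (ZMod n) with hGdef
  have hcard : Fintype.card G = n :=
    (Fintype.card_multiplicative (ZMod n)).trans (ZMod.card n)
  have hord_dvd : ∀ x : G, orderOf x ∣ n := fun x => dvd_trans orderOf_dvd_card hcard.dvd
  have hp₁1 : p₁ ≠ 1 := hp₁.one_lt.ne'
  have hp₂1 : p₂ ≠ 1 := hp₂.one_lt.ne'
  have hp₁n : p₁ ≠ n := by
    rw [hn]; intro h
    nlinarith [hp₁.two_le, hp₂.two_le]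
  have hp₂n : p₂ ≠ n := by
    rw [hn]; intro h
    nlinarith [hp₁.two_le, hp₂.two_le]
  have hdiv : ∀ d, d ∣ n → d = 1 ∨ d = p₁ ∨ d = p₂ ∨ d = n := by
    intro d hd
    rw [hn] at hd
    by_cases h1 : p₁ ∣ d
    · obtain ⟨e, rfl⟩ := h1
      have he : e ∣ p₂ := (mul_dvd_mul_iff_left hp₁.pos.ne').mp hd
      rcases hp₂.eq_one_or_self_of_dvd e he with rfl | rfl
      · right; left; simp
      · right; right; right; rw [hn]
    · have hcop : Nat.Coprime d p₁ := (hp₁.coprime_iff_not_dvd.mpr h1).symm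
      have hd2 : d ∣ p₂ := hcop.dvd_of_dvd_mul_left hd
      rcases hp₂.eq_one_or_self_of_dvd d hd2 with rfl | rfl
      · left; rfl
      · right; right; left; rfl
  -- Part 1
  have part1 : ({x : G | orderOf x = n ∨ x = 1}ᶜ
      = {x : G | orderOf x = p₁} ∪ {x : G | orderOf x = p₂}) := by
    ext x
    simp only [Set.mem_compl_iff, Set.mem_setOf_eq, Set.mem_union, not_or]
    constructor
    · rintro ⟨hxn, hx1⟩
      rcases hdiv _ (hord_dvd x) with h | h | h | h
      · exact absurd (orderOf_eq_one_iff.mp h) hx1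
      · exact Or.inl h
      · exact Or.inr h
      · exact absurd h hxn
    · rintro (h | h)
      · exact ⟨by rw [h]; exact hp₁n, fun h1 => by rw [h1, orderOf_one] at h; exact hp₁1 h.symm⟩
      · exact ⟨by rw [h]; exact hp₂n, fun h1 => by rw [h1, orderOf_one] at h; exact hp₂1 h.symm⟩
  -- Cliques
  have part2 : (powerGraph G).IsClique {x : G | orderOf x = p₁} := by
    intro x hx y hy hne
    exact ⟨hne, Or.inl (aux_mem_zpowers hp₁.pos hx hy)⟩
  have part3 : (powerGraph G).IsClique {x : G | orderOf x = p₂} := by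
    intro x hx y hy hne
    exact ⟨hne, Or.inl (aux_mem_zpowers hp₂.pos hx hy)⟩
  -- Cardinalities
  have part4 : {x : G | orderOf x = p₁}.ncard = p₁ - 1 := by
    rw [aux_ncard_orderOf (by rw [hcard, hn]; exact dvd_mul_right _ _)]
    exact Nat.totient_prime hp₁
  have part5 : {x : G | orderOf x = p₂}.ncard = p₂ - 1 := by
    rw [aux_ncard_orderOf (by rw [hcard, hn]; exact dvd_mul_left _ _)]
    exact Nat.totient_prime hp₂
  -- No cross edges
  have part6 : ∀ a b : G, orderOf a = p₁ → orderOf b = p₂ → ¬ (powerGraph G).Adj a b := by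
    rintro a b ha hb ⟨hne, h | h⟩
    · have := orderOf_dvd_of_mem_zpowers h
      rw [ha, hb] at this
      exact hlt.ne ((Nat.prime_dvd_prime_iff_eq hp₁ hp₂).mp this)
    · have := orderOf_dvd_of_mem_zpowers h
      rw [ha, hb] at this
      exact hlt.ne ((Nat.prime_dvd_prime_iff_eq hp₂ hp₁).mp this).symm
  refine ⟨part1, part2, part3, part4, part5, part6, ?_⟩
  -- No cyclic cutset
  rintro ⟨S, u, v, hnr, ⟨wu, hru, cu, hcu⟩, ⟨wv, hrv, cv, hcv⟩⟩
  -- universal vertices must be in S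
  have huniv : ∀ t : G, (orderOf t = n ∨ t = 1) → ∀ z : G, z ≠ t → (powerGraph G).Adj t z := by
    rintro t (ht | rfl) z hz
    · have htop : Subgroup.zpowers t = ⊤ := by
        rw [← Subgroup.card_eq_iff_eq_top, Nat.card_zpowers, ht, Nat.card_eq_fintype_card, hcard]
      exact ⟨hz.symm, Or.inr (htop ▸ Subgroup.mem_top z)⟩
    · exact ⟨hz.symm, Or.inl (Subgroup.one_mem _)⟩
  have hS : ∀ t : G, (orderOf t = n ∨ t = 1) → t ∈ S := by
    intro t ht
    by_contra htS
    have hreach : ∀ z : ↥(Sᶜ), ((powerGraph G).induce Sᶜ).Reachable z ⟨t, htS⟩ := by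
      intro z
      by_cases hz : z = ⟨t, htS⟩
      · rw [hz]
      · refine SimpleGraph.Adj.reachable ?_
        exact (huniv t ht z.val (fun h => hz (Subtype.ext h))).symm
    exact hnr ((hreach u).trans (hreach v).symm)
  have hSc : ∀ z : ↥(Sᶜ), orderOf (z : G) = p₁ ∨ orderOf (z : G) = p₂ := by
    intro z
    rcases hdiv _ (hord_dvd (z : G)) with h | h | h | h
    · exact absurd (hS _ (Or.inr (orderOf_eq_one_iff.mp h))) z.2
    · exact Or.inl h
    · exact Or.inr h
    · exact absurd (hS _ (Or.inl h)) z.2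
  -- order constant along walks
  have hwalk : ∀ {a b : ↥(Sᶜ)}, ((powerGraph G).induce Sᶜ).Walk a b →
      orderOf (a : G) = orderOf (b : G) := by
    intro a b w
    induction w with
    | nil => rfl
    | @cons a c b h w ih =>
      have hadj : (powerGraph G).Adj (a : G) (c : G) := h
      rcases hSc a with ha | ha <;> rcases hSc c with hc | hc
      · rw [ha.trans hc.symm] at *; exact ih
      · exact absurd hadj (part6 _ _ ha hc)
      · exact absurd hadj.symm (part6 _ _ hc ha)
      · rw [ha.trans hc.symm] at *; exact ih
  -- u and v have different orders
  have hdiff : orderOf (u : G) ≠ orderOf (v : G) := by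
    intro h
    have hne : u ≠ v := fun h' => hnr (h' ▸ SimpleGraph.Reachable.refl u)
    refine hnr (SimpleGraph.Adj.reachable ?_)
    show (powerGraph G).Adj (u : G) (v : G)
    refine ⟨fun hh => hne (Subtype.ext hh), Or.inl ?_⟩
    rcases hSc u with h1 | h1
    · exact aux_mem_zpowers hp₁.pos h1 (h.symm.trans h1)
    · exact aux_mem_zpowers hp₂.pos h1 (h.symm.trans h1)
  -- a vertex of order p₁ cannot lie in a cyclic component
  have cyc : ∀ (z : ↥(Sᶜ)), orderOf (z : G) = p₁ →
      ¬ InCyclicComp ((powerGraph G).induce Sᶜ) z := by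
    rintro z hz ⟨w, hr, c, hc⟩
    obtain ⟨wk⟩ := hr
    have hwz : orderOf (w : G) = p₁ := (hwalk wk).symm.trans hz
    have hsupp : ∀ y ∈ c.support.tail, orderOf ((y : ↥(Sᶜ)) : G) = p₁ := by
      intro y hy
      have hy' : y ∈ c.support := List.mem_of_mem_tail hy
      exact (hwalk (c.takeUntil y hy')).symm.trans hwz
    have hnodup : c.support.tail.Nodup := ((SimpleGraph.Walk.isCycle_def c).mp hc).2.2
    have hlen : c.support.tail.length = c.length := by
      simp [List.length_tail, SimpleGraph.Walk.length_support]
    have h3 : 3 ≤ c.support.tail.toFinset.card := by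
      rw [List.toFinset_card_of_nodup hnodup, hlen]
      exact hc.three_le_length
    have hFcard : (c.support.tail.toFinset.image Subtype.val).card
        = c.support.tail.toFinset.card :=
      Finset.card_image_of_injective _ Subtype.val_injective
    have hFsub : ↑(c.support.tail.toFinset.image Subtype.val)
        ⊆ {x : G | orderOf x = p₁} := by
      intro x hx
      simp only [Finset.coe_image, Set.mem_image, Finset.mem_coe, List.mem_toFinset] at hx
      obtain ⟨y, hy, rfl⟩ := hx
      exact hsupp y hy
    have hle := Set.ncard_le_ncard hFsub (Set.toFinite _)
    rw [Set.ncard_coe_finset, hFcard, part4] at hle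
    rcases hsmall with rfl | rfl <;> omega
  rcases hSc u with hu | hu
  · exact cyc u hu ⟨wu, hru, cu, hcu⟩
  · rcases hSc v with hv | hv
    · exact cyc v hv ⟨wv, hrv, cv, hcv⟩
    · exact hdiff (hu.trans hv.symm)
end

section
/- Let n = 2^{α_1} p_2^{α_2}···p_r^{α_r} with odd primes p_2 < ··· < p_r. If x is the unique involution of C_n, then |N(x)| = (2^{α_1} − 1)·p_2^{α_2}···p_r^{α_r}, and if y has order 2^{α_1} then |N([y])| = 2^{α_1−1}·p_2^{α_2}···p_r^{α_r}; hence |N(x)| − |N([y])| = (2^{α_1−1} − 1)·p_2^{α_2}···p_r^{α_r}, which is positive whenever α_1 > 1. -/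
open Finset Subgroup

section Helpers

variable {G : Type*} [Group G] [Fintype G] [DecidableEq G] [IsCyclic G]

lemma myCard_pow_eq_one {k : ℕ} (hk : k ∣ Fintype.card G) (hk0 : k ≠ 0) :
    (univ.filter fun v : G => v ^ k = 1).card = k := by
  rw [← sum_card_orderOf_eq_card_pow_eq_one hk0,
    Finset.sum_congr rfl fun d hd =>
      IsCyclic.card_orderOf_eq_totient ((Nat.mem_divisors.mp hd).1.trans hk)]
  exact Nat.sum_totient k

lemma filter_zpowers_eq (u : G) :
    (univ.filter fun v : G => v ∈ zpowers u) = univ.filter (fun v => v ^ orderOf u = 1) := by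
  apply Finset.eq_of_subset_of_card_le
  · intro v hv
    simp only [mem_filter, mem_univ, true_and] at hv ⊢
    exact orderOf_dvd_iff_pow_eq_one.mp (orderOf_dvd_of_mem_zpowers hv)
  · rw [myCard_pow_eq_one orderOf_dvd_card (orderOf_pos u).ne', ← Fintype.card_subtype]
    exact le_of_eq (Fintype.card_zpowers).symm

lemma mem_zpowers_iff_pow {u v : G} : v ∈ zpowers u ↔ v ^ orderOf u = 1 := by
  have h := filter_zpowers_eq u
  constructor
  · intro hv
    have : v ∈ univ.filter (fun w : G => w ∈ zpowers u) := by simpa using hv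
    rw [h] at this; simpa using this
  · intro hv
    have : v ∈ univ.filter (fun w : G => w ^ orderOf u = 1) := by simpa using hv
    rw [← h] at this; simpa using this

lemma zpowers_eq_of_orderOf_eq {u w : G} (h : orderOf u = orderOf w) :
    zpowers u = zpowers w := by
  ext v
  rw [mem_zpowers_iff_pow, mem_zpowers_iff_pow, h]

lemma mem_zpowers_iff_orderOf_dvd_s12 {u z : G} :
    u ∈ zpowers z ↔ orderOf u ∣ orderOf z := by
  constructor
  · exact orderOf_dvd_of_mem_zpowers
  · intro h
    rcases Nat.eq_zero_or_pos (orderOf u) with h0 | h0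
    · exact absurd (orderOf_pos u).ne' (by omega)
    set w := z ^ (orderOf z / orderOf u) with hw
    have hww : orderOf w = orderOf u := by
      rw [hw, orderOf_pow, Nat.gcd_eq_right (Nat.div_dvd_of_dvd h),
        Nat.div_div_self h (orderOf_pos z).ne']
    have h1 : u ∈ zpowers w := by
      rw [← zpowers_eq_of_orderOf_eq hww.symm]; exact Subgroup.mem_zpowers u
    exact Subgroup.zpowers_le.mpr (Subgroup.pow_mem _ (Subgroup.mem_zpowers z) _) h1

end Helpers

lemma nt_lemma {a m t i : ℕ} (hm : Odd m) (ht : t ∣ 2 ^ a * m) (hi : 1 ≤ i) :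
    ¬ 2 ^ i ∣ t ↔ t ∣ 2 ^ (i - 1) * m := by
  have hmodd : ¬ (2 ∣ m) := by rw [Nat.odd_iff] at hm; omega
  constructor
  · intro h
    have ht0 : t ≠ 0 := by rintro rfl; exact h (dvd_zero _)
    have hb : t.factorization 2 < i := by
      by_contra hb
      exact h ((Nat.Prime.pow_dvd_iff_le_factorization Nat.prime_two ht0).mpr (le_of_not_gt hb))
    have hcop : Nat.Coprime (ordCompl[2] t) (2 ^ a) :=
      Nat.Coprime.pow_right _
        (Nat.coprime_comm.mp ((Nat.Prime.coprime_iff_not_dvd Nat.prime_two).mpr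
          (Nat.not_dvd_ordCompl Nat.prime_two ht0)))
    have hc : ordCompl[2] t ∣ m :=
      hcop.dvd_of_dvd_mul_left ((Nat.ordCompl_dvd t 2).trans ht)
    calc t = 2 ^ t.factorization 2 * ordCompl[2] t :=
          (Nat.ordProj_mul_ordCompl_eq_self t 2).symm
      _ ∣ 2 ^ (i - 1) * m := mul_dvd_mul (pow_dvd_pow 2 (by omega)) hc
  · intro h h2
    have hdd : (2:ℕ) ^ (i - 1) * 2 ∣ 2 ^ (i - 1) * m := by
      calc (2:ℕ) ^ (i - 1) * 2 = 2 ^ i := by rw [← pow_succ]; congr 1; omega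
        _ ∣ _ := h2.trans h
    exact hmodd ((mul_dvd_mul_iff_left (pow_ne_zero (i-1) (two_ne_zero))).mp hdd)

section Counts

variable {G : Type*} [Group G] [Fintype G] [DecidableEq G] [IsCyclic G]
variable {a m : ℕ}

lemma ord_dvd_n (hcard : Fintype.card G = 2 ^ a * m) (z : G) :
    orderOf z ∣ 2 ^ a * m := hcard ▸ orderOf_dvd_card

lemma two_dvd_ord_iff (ha : 1 ≤ a) (hm : Odd m) (hcard : Fintype.card G = 2 ^ a * m) (z : G) :
    2 ∣ orderOf z ↔ ¬ z ^ m = 1 := by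
  rw [← orderOf_dvd_iff_pow_eq_one]
  have h1 := nt_lemma (i := 1) hm (ord_dvd_n hcard z) le_rfl
  simp only [pow_one, Nat.sub_self, pow_zero, one_mul] at h1
  rw [← h1, not_not]

lemma pow_dvd_ord_iff (ha : 1 ≤ a) (hm : Odd m) (hcard : Fintype.card G = 2 ^ a * m) (z : G) :
    2 ^ a ∣ orderOf z ↔ ¬ z ^ (2 ^ (a - 1) * m) = 1 := by
  rw [← orderOf_dvd_iff_pow_eq_one]
  have h1 := nt_lemma (i := a) hm (ord_dvd_n hcard z) ha
  rw [← h1, not_not]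

lemma hm_pos (hm : Odd m) : 0 < m := by
  rcases Nat.eq_zero_or_pos m with h | h
  · subst h; simp [Nat.odd_iff] at hm
  · exact h

lemma count_even (ha : 1 ≤ a) (hm : Odd m) (hcard : Fintype.card G = 2 ^ a * m) :
    (univ.filter fun z : G => 2 ∣ orderOf z).card = 2 ^ a * m - m := by
  have key : (univ.filter fun z : G => 2 ∣ orderOf z)
      = univ \ (univ.filter fun z : G => z ^ m = 1) := by
    ext z
    simp only [mem_filter, mem_univ, true_and, mem_sdiff]
    exact two_dvd_ord_iff ha hm hcard z
  rw [key, card_sdiff_of_subset (filter_subset _ _), card_univ, hcard,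
    myCard_pow_eq_one (by rw [hcard]; exact Dvd.intro_left _ rfl) (hm_pos hm).ne']

lemma count_pow_dvd (ha : 1 ≤ a) (hm : Odd m) (hcard : Fintype.card G = 2 ^ a * m) :
    (univ.filter fun z : G => 2 ^ a ∣ orderOf z).card = 2 ^ (a - 1) * m := by
  have h2a : (2:ℕ) ^ a = 2 * 2 ^ (a - 1) := by
    rw [← pow_succ']; congr 1; omega
  have hd : 2 ^ (a - 1) * m ∣ 2 ^ a * m :=
    mul_dvd_mul (pow_dvd_pow 2 (by omega)) dvd_rfl
  have hne : 2 ^ (a - 1) * m ≠ 0 :=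
    Nat.mul_ne_zero (pow_ne_zero _ two_ne_zero) (hm_pos hm).ne'
  have key : (univ.filter fun z : G => 2 ^ a ∣ orderOf z)
      = univ \ (univ.filter fun z : G => z ^ (2 ^ (a - 1) * m) = 1) := by
    ext z
    simp only [mem_filter, mem_univ, true_and, mem_sdiff]
    exact pow_dvd_ord_iff ha hm hcard z
  rw [key, card_sdiff_of_subset (filter_subset _ _), card_univ, hcard,
    myCard_pow_eq_one (by rw [hcard]; exact hd) hne, h2a, mul_assoc]
  omega

lemma count_ord_eq (ha : 1 ≤ a) (hcard : Fintype.card G = 2 ^ a * m) :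
    (univ.filter fun z : G => orderOf z = 2 ^ a).card = 2 ^ (a - 1) := by
  have hd : (2:ℕ) ^ a ∣ Fintype.card G := by rw [hcard]; exact Dvd.intro m rfl
  rw [IsCyclic.card_orderOf_eq_totient hd, Nat.totient_prime_pow Nat.prime_two ha]
  simp

lemma count_pow_eq_one (ha : 1 ≤ a) (hm : Odd m) (hcard : Fintype.card G = 2 ^ a * m) :
    (univ.filter fun z : G => z ^ 2 ^ a = 1).card = 2 ^ a :=
  myCard_pow_eq_one (by rw [hcard]; exact Dvd.intro m rfl) (pow_ne_zero _ two_ne_zero)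

end Counts
/-- Neighbourhood sizes for the unique involution and an element of maximal
2-power order in C_n, n = 2^a · m with m odd. -/
theorem stmt12 (a m n : ℕ) (ha : 1 ≤ a) (hm : Odd m) (hn : n = 2 ^ a * m)
    [NeZero n] (x y : Multiplicative (ZMod n))
    (hx : orderOf x = 2) (hy : orderOf y = 2 ^ a) :
    ((powerGraph (Multiplicative (ZMod n))).neighborSet x).ncard
        = (2 ^ a - 1) * m ∧
    (setNbhd (powerGraph (Multiplicative (ZMod n))) (genClass y)).ncard
        = 2 ^ (a - 1) * m ∧
    ((powerGraph (Multiplicative (ZMod n))).neighborSet x).ncard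
        - (setNbhd (powerGraph (Multiplicative (ZMod n))) (genClass y)).ncard
      = (2 ^ (a - 1) - 1) * m ∧
    (1 < a → 0 < (2 ^ (a - 1) - 1) * m) := by
  classical
  have hcard : Fintype.card (Multiplicative (ZMod n)) = 2 ^ a * m := by
    rw [Fintype.card_multiplicative, ZMod.card, hn]
  have hm1 : 0 < m := hm_pos hm
  have h2a : (2:ℕ) ^ a = 2 * 2 ^ (a - 1) := by rw [← pow_succ']; congr 1; omega
  have hp1 : 1 ≤ (2:ℕ) ^ (a - 1) := Nat.one_le_two_pow
  set Γ := powerGraph (Multiplicative (ZMod n)) with hΓ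
  have adj_iff : ∀ u v : Multiplicative (ZMod n),
      Γ.Adj u v ↔ u ≠ v ∧ (orderOf u ∣ orderOf v ∨ orderOf v ∣ orderOf u) := by
    intro u v
    show (u ≠ v ∧ (u ∈ Subgroup.zpowers v ∨ v ∈ Subgroup.zpowers u)) ↔ _
    rw [mem_zpowers_iff_orderOf_dvd_s12, mem_zpowers_iff_orderOf_dvd_s12]
  -- Part 1
  have hNx : (Γ.neighborSet x) =
      ↑((univ.filter fun z : Multiplicative (ZMod n) => 2 ∣ orderOf z ∧ z ≠ x) ∪ {1}) := by
    ext z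
    simp only [SimpleGraph.mem_neighborSet, Finset.mem_coe, Finset.mem_union, Finset.mem_filter,
      Finset.mem_univ, true_and, Finset.mem_singleton, adj_iff, hx]
    constructor
    · rintro ⟨hne, h | h⟩
      · exact Or.inl ⟨h, fun h' => hne h'.symm⟩
      · rcases (Nat.dvd_prime Nat.prime_two).mp h with h1 | h2
        · exact Or.inr (orderOf_eq_one_iff.mp h1)
        · exact Or.inl ⟨h2 ▸ dvd_rfl, fun h' => hne h'.symm⟩
    · rintro (⟨hdvd, hne⟩ | rfl)
      · exact ⟨fun h' => hne h'.symm, Or.inl hdvd⟩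
      · refine ⟨fun h' => ?_, Or.inr (by simp)⟩
        rw [h', orderOf_one] at hx
        exact absurd hx (by norm_num)
  have hNxcard : ((univ.filter fun z : Multiplicative (ZMod n) =>
      2 ∣ orderOf z ∧ z ≠ x) ∪ {1}).card = 2 ^ a * m - m := by
    have h1notin : (1 : Multiplicative (ZMod n))
        ∉ (univ.filter fun z : Multiplicative (ZMod n) => 2 ∣ orderOf z ∧ z ≠ x) := by
      simp
    rw [Finset.card_union_of_disjoint (by simpa using h1notin)]
    have heq : (univ.filter fun z : Multiplicative (ZMod n) => 2 ∣ orderOf z ∧ z ≠ x)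
        = (univ.filter fun z : Multiplicative (ZMod n) => 2 ∣ orderOf z) \ {x} := by
      ext z
      simp only [mem_filter, mem_univ, true_and, mem_sdiff, mem_singleton]
    rw [heq, card_sdiff_of_subset (by simp [hx]), count_even ha hm hcard, card_singleton]
    have hmle : m + 1 ≤ 2 ^ a * m := by
      calc m + 1 ≤ 2 * m := by omega
        _ ≤ 2 ^ a * m := Nat.mul_le_mul_right m
            (by calc (2:ℕ) = 2 ^ 1 := (pow_one 2).symm
                  _ ≤ 2 ^ a := Nat.pow_le_pow_right (by norm_num) ha)
    obtain ⟨Q, hQ⟩ : ∃ Q, 2 ^ a * m = Q := ⟨_, rfl⟩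
    rw [hQ] at hmle ⊢
    simp only [Finset.card_singleton]
    omega
  have R1 : (Γ.neighborSet x).ncard = (2 ^ a - 1) * m := by
    rw [hNx, Set.ncard_coe_finset, hNxcard, Nat.sub_mul, one_mul]
  -- Part 2
  have hgen : genClass y = {v : Multiplicative (ZMod n) | orderOf v = 2 ^ a} := by
    ext v
    simp only [genClass, Set.mem_setOf_eq]
    constructor
    · intro h
      have h1 : v ∈ Subgroup.zpowers y := h ▸ Subgroup.mem_zpowers v
      have h2 : y ∈ Subgroup.zpowers v := h.symm ▸ Subgroup.mem_zpowers y
      exact hy ▸ Nat.dvd_antisymm (orderOf_dvd_of_mem_zpowers h1)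
        (orderOf_dvd_of_mem_zpowers h2)
    · intro h
      exact zpowers_eq_of_orderOf_eq (by rw [h, hy])
  have hSN : setNbhd Γ (genClass y)
      = ↑(univ.filter fun v : Multiplicative (ZMod n) =>
          orderOf v ≠ 2 ^ a ∧ (v ^ 2 ^ a = 1 ∨ 2 ^ a ∣ orderOf v)) := by
    ext v
    simp only [setNbhd, hgen, Set.mem_setOf_eq, Finset.mem_coe, Finset.mem_filter,
      Finset.mem_univ, true_and]
    constructor
    · rintro ⟨hv, g, hg, hadj⟩
      rw [adj_iff] at hadj
      obtain ⟨hne, hd | hd⟩ := hadj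
      · exact ⟨hv, Or.inl (orderOf_dvd_iff_pow_eq_one.mp (hg ▸ hd))⟩
      · exact ⟨hv, Or.inr (hg ▸ hd)⟩
    · rintro ⟨hv, hc⟩
      refine ⟨hv, y, hy, ?_⟩
      rw [adj_iff]
      refine ⟨fun hvy => hv (by rw [hvy, hy]), ?_⟩
      rcases hc with h | h
      · exact Or.inl (by rw [hy]; exact orderOf_dvd_iff_pow_eq_one.mpr h)
      · exact Or.inr (by rw [hy]; exact h)
  have hScard : (univ.filter fun v : Multiplicative (ZMod n) =>
      orderOf v ≠ 2 ^ a ∧ (v ^ 2 ^ a = 1 ∨ 2 ^ a ∣ orderOf v)).card = 2 ^ (a - 1) * m := by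
    have hsplit : (univ.filter fun v : Multiplicative (ZMod n) =>
        orderOf v ≠ 2 ^ a ∧ (v ^ 2 ^ a = 1 ∨ 2 ^ a ∣ orderOf v))
      = (univ.filter fun v : Multiplicative (ZMod n) => v ^ 2 ^ a = 1 ∧ orderOf v ≠ 2 ^ a)
        ∪ (univ.filter fun v : Multiplicative (ZMod n) =>
            2 ^ a ∣ orderOf v ∧ orderOf v ≠ 2 ^ a) := by
      ext v
      simp only [mem_filter, mem_univ, true_and, mem_union]
      tauto
    have hdisj : Disjoint
        (univ.filter fun v : Multiplicative (ZMod n) => v ^ 2 ^ a = 1 ∧ orderOf v ≠ 2 ^ a)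
        (univ.filter fun v : Multiplicative (ZMod n) =>
          2 ^ a ∣ orderOf v ∧ orderOf v ≠ 2 ^ a) := by
      rw [Finset.disjoint_left]
      intro v h1 h2
      simp only [mem_filter, mem_univ, true_and] at h1 h2
      exact h1.2 (Nat.dvd_antisymm (orderOf_dvd_iff_pow_eq_one.mpr h1.1) h2.1)
    have hB1 : (univ.filter fun v : Multiplicative (ZMod n) =>
        v ^ 2 ^ a = 1 ∧ orderOf v ≠ 2 ^ a).card = 2 ^ (a - 1) := by
      have heq : (univ.filter fun v : Multiplicative (ZMod n) =>
          v ^ 2 ^ a = 1 ∧ orderOf v ≠ 2 ^ a)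
          = (univ.filter fun v : Multiplicative (ZMod n) => v ^ 2 ^ a = 1)
            \ (univ.filter fun v : Multiplicative (ZMod n) => orderOf v = 2 ^ a) := by
        ext v
        simp only [mem_filter, mem_univ, true_and, mem_sdiff]
      have hsub : (univ.filter fun v : Multiplicative (ZMod n) => orderOf v = 2 ^ a)
          ⊆ (univ.filter fun v : Multiplicative (ZMod n) => v ^ 2 ^ a = 1) := by
        intro v hv
        simp only [mem_filter, mem_univ, true_and] at hv ⊢
        exact orderOf_dvd_iff_pow_eq_one.mp (hv ▸ dvd_rfl)
      rw [heq, card_sdiff_of_subset hsub, count_pow_eq_one ha hm hcard, count_ord_eq ha hcard]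
      omega
    have hB2 : (univ.filter fun v : Multiplicative (ZMod n) =>
        2 ^ a ∣ orderOf v ∧ orderOf v ≠ 2 ^ a).card = 2 ^ (a - 1) * m - 2 ^ (a - 1) := by
      have heq : (univ.filter fun v : Multiplicative (ZMod n) =>
          2 ^ a ∣ orderOf v ∧ orderOf v ≠ 2 ^ a)
          = (univ.filter fun v : Multiplicative (ZMod n) => 2 ^ a ∣ orderOf v)
            \ (univ.filter fun v : Multiplicative (ZMod n) => orderOf v = 2 ^ a) := by
        ext v
        simp only [mem_filter, mem_univ, true_and, mem_sdiff]
      have hsub : (univ.filter fun v : Multiplicative (ZMod n) => orderOf v = 2 ^ a)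
          ⊆ (univ.filter fun v : Multiplicative (ZMod n) => 2 ^ a ∣ orderOf v) := by
        intro v hv
        simp only [mem_filter, mem_univ, true_and] at hv ⊢
        exact hv ▸ dvd_rfl
      rw [heq, card_sdiff_of_subset hsub, count_pow_dvd ha hm hcard, count_ord_eq ha hcard]
    rw [hsplit, Finset.card_union_of_disjoint hdisj, hB1, hB2]
    exact Nat.add_sub_cancel' (Nat.le_mul_of_pos_right _ hm1)
  have R2 : (setNbhd Γ (genClass y)).ncard = 2 ^ (a - 1) * m := by
    rw [hSN, Set.ncard_coe_finset, hScard]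
  refine ⟨R1, R2, ?_, ?_⟩
  · rw [R1, R2, ← Nat.sub_mul]
    congr 1
    omega
  · intro haa
    have h2le : 2 ≤ (2:ℕ) ^ (a - 1) := by
      calc (2:ℕ) = 2 ^ 1 := (pow_one 2).symm
        _ ≤ 2 ^ (a - 1) := Nat.pow_le_pow_right (by norm_num) (by omega)
    exact Nat.mul_pos (by omega) hm1
end

section
/- For n ≥ 3, the power graph of the dihedral group D_{2n} is cyclically separable if and only if the power graph of the cyclic group C_n is cyclically separable; equivalently, iff n has at least two prime factors, n ≠ p_1p_2 for primes p_1 < p_2 with p_1 ≤ 3, and n ≠ 12. -/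
open SimpleGraph

section GraphGeneral
variable {V : Type*} {Γ : SimpleGraph V}

lemma walk_support_stay {C1 C2 : Set V}
    (hdisj : ∀ a b, a ∈ C1 → b ∈ C2 → ¬Γ.Adj a b) :
    ∀ {u v : V} (p : Γ.Walk u v), (∀ x ∈ p.support, x ∈ C1 ∪ C2) → u ∈ C1 →
      ∀ x ∈ p.support, x ∈ C1 := by
  intro u v p
  induction p with
  | nil => intro _ hu x hx; simp at hx; subst hx; exact hu
  | @cons a b c hadj q ih =>
    intro hsupp hu x hx
    have hb : b ∈ C1 := by
      rcases hsupp b (by simp) with hb | hb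
      · exact hb
      · exact absurd hadj (hdisj a b hu hb)
    rcases (by simpa using hx : x = a ∨ x ∈ q.support) with rfl | hx'
    · exact hu
    · exact ih (fun y hy => hsupp y (by simp [hy])) hb x hx'

lemma sep_iff_exists_set : CyclicallySeparable Γ ↔
    ∃ A : Set V, ∃ u v : ↥A, ¬ (Γ.induce A).Reachable u v ∧
      InCyclicComp (Γ.induce A) u ∧ InCyclicComp (Γ.induce A) v := by
  constructor
  · rintro ⟨S, h⟩; exact ⟨Sᶜ, h⟩
  · rintro ⟨A, h⟩; refine ⟨Aᶜ, ?_⟩; unfold IsCyclicCutset; rw [compl_compl]; exact h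

lemma triangle_isCycle {x y z : V} (hxy : Γ.Adj x y) (hyz : Γ.Adj y z) (hzx : Γ.Adj z x) :
    (Walk.cons hxy (Walk.cons hyz (Walk.cons hzx Walk.nil))).IsCycle := by
  have h1 := hxy.ne
  have h2 := hyz.ne
  have h3 := hzx.ne
  simp [Walk.isCycle_def, Walk.isTrail_def, Walk.edges, Sym2.eq, Sym2.rel_iff]
  aesop

end GraphGeneral

section GraphGeneral2
variable {V : Type*} {Γ : SimpleGraph V}

lemma induce_adj' {A : Set V} {x y : ↥A} : (Γ.induce A).Adj x y ↔ Γ.Adj x.1 y.1 := by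
  simp [SimpleGraph.induce]

lemma sep_of_two_triangles {a b c d e f : V}
    (hab : Γ.Adj a b) (hbc : Γ.Adj b c) (hca : Γ.Adj c a)
    (hde : Γ.Adj d e) (hef : Γ.Adj e f) (hfd : Γ.Adj f d)
    (hcross : ∀ x ∈ ({a, b, c} : Set V), ∀ y ∈ ({d, e, f} : Set V),
      x ≠ y ∧ ¬Γ.Adj x y) : CyclicallySeparable Γ := by
  rw [sep_iff_exists_set]
  refine ⟨{a, b, c, d, e, f}, ⟨a, by simp⟩, ⟨d, by simp⟩, ?_, ?_, ?_⟩
  · rintro ⟨p⟩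
    have := walk_support_stay (Γ := Γ.induce {a, b, c, d, e, f})
      (C1 := {x | x.1 ∈ ({a,b,c} : Set V)}) (C2 := {x | x.1 ∈ ({d,e,f} : Set V)})
      (by rintro x y hx hy hadj
          exact (hcross x.1 hx y.1 hy).2 (induce_adj'.mp hadj))
      p
      (by intro x _
          have h6 := x.2
          simp only [Set.mem_insert_iff, Set.mem_singleton_iff] at h6
          rcases h6 with h|h|h|h|h|h
          · exact Or.inl (show _ ∈ ({a,b,c} : Set V) by rw [h]; simp)
          · exact Or.inl (show _ ∈ ({a,b,c} : Set V) by rw [h]; simp)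
          · exact Or.inl (show _ ∈ ({a,b,c} : Set V) by rw [h]; simp)
          · exact Or.inr (show _ ∈ ({d,e,f} : Set V) by rw [h]; simp)
          · exact Or.inr (show _ ∈ ({d,e,f} : Set V) by rw [h]; simp)
          · exact Or.inr (show _ ∈ ({d,e,f} : Set V) by rw [h]; simp))
      (show _ ∈ ({a,b,c} : Set V) by simp)
    have hd : (d : V) ∈ ({a,b,c} : Set V) := this ⟨d, by simp⟩ (SimpleGraph.Walk.end_mem_support p)
    simp only [Set.mem_insert_iff, Set.mem_singleton_iff] at hd
    rcases hd with h|h|h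
    all_goals exact (hcross d (by simp [h.symm]) d (by simp)).1 rfl
  · refine ⟨⟨a, by simp⟩, SimpleGraph.Reachable.refl _, ?_⟩
    have h1 : (Γ.induce {a,b,c,d,e,f}).Adj ⟨a, by simp⟩ ⟨b, by simp⟩ := induce_adj'.mpr hab
    have h2 : (Γ.induce {a,b,c,d,e,f}).Adj ⟨b, by simp⟩ ⟨c, by simp⟩ := induce_adj'.mpr hbc
    have h3 : (Γ.induce {a,b,c,d,e,f}).Adj ⟨c, by simp⟩ ⟨a, by simp⟩ := induce_adj'.mpr hca
    exact ⟨_, triangle_isCycle h1 h2 h3⟩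
  · refine ⟨⟨d, by simp⟩, SimpleGraph.Reachable.refl _, ?_⟩
    have h1 : (Γ.induce {a,b,c,d,e,f}).Adj ⟨d, by simp⟩ ⟨e, by simp⟩ := induce_adj'.mpr hde
    have h2 : (Γ.induce {a,b,c,d,e,f}).Adj ⟨e, by simp⟩ ⟨f, by simp⟩ := induce_adj'.mpr hef
    have h3 : (Γ.induce {a,b,c,d,e,f}).Adj ⟨f, by simp⟩ ⟨d, by simp⟩ := induce_adj'.mpr hfd
    exact ⟨_, triangle_isCycle h1 h2 h3⟩

end GraphGeneral2

section GraphGeneral3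
variable {V : Type*} {Γ : SimpleGraph V}

lemma not_sep_of_complete (h : ∀ x y : V, x ≠ y → Γ.Adj x y) :
    ¬ CyclicallySeparable Γ := by
  rintro ⟨S, u, v, hnr, -, -⟩
  rcases eq_or_ne u v with rfl | huv
  · exact hnr (SimpleGraph.Reachable.refl _)
  · exact hnr (SimpleGraph.Adj.reachable (induce_adj'.mpr
      (h u.1 v.1 (fun hh => huv (Subtype.ext hh)))))

lemma reachable_of_mem_support {u v w : V} (p : Γ.Walk u v) (h : w ∈ p.support) :
    Γ.Reachable u w := by
  classical
  exact ⟨p.takeUntil w h⟩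

lemma exists_cycles_of_sep (h : CyclicallySeparable Γ) :
    ∃ (w1 w2 : V) (c1 : Γ.Walk w1 w1) (c2 : Γ.Walk w2 w2),
      c1.IsCycle ∧ c2.IsCycle ∧
      ∀ x ∈ c1.support, ∀ y ∈ c2.support, x ≠ y ∧ ¬Γ.Adj x y := by
  classical
  obtain ⟨S, u, v, hnr, ⟨w1, hr1, c1, hc1⟩, ⟨w2, hr2, c2, hc2⟩⟩ := h
  set ι : Γ.induce Sᶜ ↪g Γ := SimpleGraph.Embedding.induce Sᶜ with hι
  have hinj : Function.Injective ι := ι.injective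
  refine ⟨ι w1, ι w2, c1.map ι.toHom, c2.map ι.toHom, hc1.map hinj, hc2.map hinj, ?_⟩
  intro x hx y hy
  rw [SimpleGraph.Walk.support_map, List.mem_map] at hx hy
  obtain ⟨x0, hx0, rfl⟩ := hx
  obtain ⟨y0, hy0, rfl⟩ := hy
  have hrx : (Γ.induce Sᶜ).Reachable u x0 := hr1.trans (reachable_of_mem_support c1 hx0)
  have hry : (Γ.induce Sᶜ).Reachable v y0 := hr2.trans (reachable_of_mem_support c2 hy0)
  constructor
  · intro hxy
    exact hnr (hrx.trans ((hinj hxy ▸ hry).symm))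
  · intro hadj
    have : (Γ.induce Sᶜ).Adj x0 y0 := induce_adj'.mpr hadj
    exact hnr (hrx.trans (this.reachable.trans hry.symm))

lemma IsCycle.exists_three {w : V} {c : Γ.Walk w w} (hc : c.IsCycle) :
    ∃ x y z, x ∈ c.support ∧ y ∈ c.support ∧ z ∈ c.support ∧
      x ≠ y ∧ x ≠ z ∧ y ≠ z := by
  have hlen := hc.three_le_length
  have hnodup := hc.support_nodup
  have hlt : 3 ≤ c.support.tail.length := by
    have := c.length_support
    have : c.support.tail.length = c.length := by
      rw [show c.support.tail.length = c.support.length - 1 from List.length_tail, this]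
      omega
    omega
  obtain ⟨x, y, z, rest, ht⟩ : ∃ x y z rest, c.support.tail = x :: y :: z :: rest := by
    rcases hl : c.support.tail with _ | ⟨x, _ | ⟨y, _ | ⟨z, rest⟩⟩⟩ <;>
      simp [hl] at hlt ⊢
  have hsub : ∀ a ∈ c.support.tail, a ∈ c.support := fun a ha => List.mem_of_mem_tail ha
  rw [ht] at hnodup hsub
  simp only [List.nodup_cons, List.mem_cons] at hnodup
  exact ⟨x, y, z, hsub x (by simp), hsub y (by simp), hsub z (by simp),
    fun hh => hnodup.1 (by simp [hh]), fun hh => hnodup.1 (by simp [hh]),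
    fun hh => hnodup.2.1 (by simp [hh])⟩

end GraphGeneral3

section GraphGeneral4
variable {V W : Type*} {Γ : SimpleGraph V} {Γ' : SimpleGraph W}

/-- Lift a walk whose support lies in `A` to the induced subgraph on `A`. -/
def liftWalk {A : Set V} :
    ∀ {a b : V} (p : Γ.Walk a b) (h : ∀ x ∈ p.support, x ∈ A),
      (Γ.induce A).Walk ⟨a, h a p.start_mem_support⟩ ⟨b, h b p.end_mem_support⟩
  | _, _, SimpleGraph.Walk.nil, _ => SimpleGraph.Walk.nil
  | _, _, SimpleGraph.Walk.cons hadj p, h =>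
      SimpleGraph.Walk.cons (by exact induce_adj'.mpr hadj)
        (liftWalk p (fun x hx => h x (by simp [hx])))

lemma liftWalk_map {A : Set V} {a b : V} (p : Γ.Walk a b) (h : ∀ x ∈ p.support, x ∈ A) :
    (liftWalk p h).map (SimpleGraph.Embedding.induce A).toHom = p := by
  induction p with
  | nil => rfl
  | cons hadj q ih => simp only [liftWalk, SimpleGraph.Walk.map_cons]; exact congrArg _ (ih _)

lemma liftWalk_isCycle {A : Set V} {a : V} (p : Γ.Walk a a) (hp : p.IsCycle)
    (h : ∀ x ∈ p.support, x ∈ A) : (liftWalk p h).IsCycle := by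
  have := SimpleGraph.Walk.map_isCycle_iff_of_injective (p := liftWalk p h)
    (f := (SimpleGraph.Embedding.induce A (G := Γ)).toHom)
    (SimpleGraph.Embedding.induce A (G := Γ)).injective
  rw [liftWalk_map] at this
  exact this.mp hp

/-- transfer the separation witnesses through a graph isomorphism -/
lemma witness_transfer (e : Γ ≃g Γ')
    (h : ∃ u v, ¬ Γ.Reachable u v ∧ InCyclicComp Γ u ∧ InCyclicComp Γ v) :
    ∃ u v, ¬ Γ'.Reachable u v ∧ InCyclicComp Γ' u ∧ InCyclicComp Γ' v := by
  obtain ⟨u, v, hnr, ⟨w1, hr1, c1, hc1⟩, ⟨w2, hr2, c2, hc2⟩⟩ := h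
  refine ⟨e u, e v, ?_, ⟨e w1, ?_, c1.map e.toHom, hc1.map e.injective⟩,
    ⟨e w2, ?_, c2.map e.toHom, hc2.map e.injective⟩⟩
  · rintro ⟨p⟩
    have := p.map e.symm.toHom
    exact hnr ⟨this.copy (e.symm_apply_apply u) (e.symm_apply_apply v)⟩
  · exact hr1.map e.toHom
  · exact hr2.map e.toHom

end GraphGeneral4

section ZModOrder
variable {n : ℕ}

lemma nat_div_dvd_div {n g ga : ℕ} (hn : n ≠ 0) (hg : g ∣ n) (hga : ga ∣ n)
    (h : n / ga ∣ n / g) : g ∣ ga := by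
  obtain ⟨k, hk⟩ := h
  have h1 : g * (n / g) = n := Nat.mul_div_cancel' hg
  have h2 : ga * (n / ga) = n := Nat.mul_div_cancel' hga
  have hpos : 0 < n / ga := Nat.div_pos (Nat.le_of_dvd (Nat.pos_of_ne_zero hn) hga)
    (Nat.pos_of_ne_zero (fun hh => hn (by simpa [hh] using hga)))
  refine ⟨k, ?_⟩
  have hn2 : n = g * k * (n / ga) := by
    calc n = g * (n / g) := h1.symm
    _ = g * ((n / ga) * k) := by rw [hk]
    _ = g * k * (n / ga) := by ring
  have : ga * (n / ga) = (g * k) * (n / ga) := by rw [h2]; exact hn2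
  exact Nat.eq_of_mul_eq_mul_right hpos this

lemma zmod_dvd_exists_zsmul [NeZero n] (a b : ZMod n)
    (h : addOrderOf a ∣ addOrderOf b) : ∃ k : ℤ, k • b = a := by
  have hn : n ≠ 0 := NeZero.ne n
  have hbv : ((b.val : ℕ) : ZMod n) = b := ZMod.natCast_rightInverse b
  have hav : ((a.val : ℕ) : ZMod n) = a := ZMod.natCast_rightInverse a
  have hb' : addOrderOf b = n / n.gcd b.val := by
    conv_lhs => rw [← hbv]
    exact ZMod.addOrderOf_coe b.val hn
  have ha' : addOrderOf a = n / n.gcd a.val := by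
    conv_lhs => rw [← hav]
    exact ZMod.addOrderOf_coe a.val hn
  rw [ha', hb'] at h
  have hgd : n.gcd b.val ∣ n.gcd a.val :=
    nat_div_dvd_div hn (Nat.gcd_dvd_left _ _) (Nat.gcd_dvd_left _ _) h
  obtain ⟨c, hc⟩ : n.gcd b.val ∣ a.val := hgd.trans (Nat.gcd_dvd_right n a.val)
  have hbez : ((n.gcd b.val : ℕ) : ZMod n) = (Nat.gcdB n b.val : ZMod n) * b := by
    have hb2 := Nat.gcd_eq_gcd_ab n b.val
    calc ((n.gcd b.val : ℕ) : ZMod n) = (((n.gcd b.val : ℕ) : ℤ) : ZMod n) := by push_cast; ring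
    _ = ((n * Nat.gcdA n b.val + b.val * Nat.gcdB n b.val : ℤ) : ZMod n) := by rw [← hb2]
    _ = (Nat.gcdB n b.val : ZMod n) * b := by
        push_cast
        rw [hbv]
        simp [ZMod.natCast_self]
        ring
  refine ⟨(c : ℤ) * Nat.gcdB n b.val, ?_⟩
  calc ((c : ℤ) * Nat.gcdB n b.val) • b
      = (c : ZMod n) * ((Nat.gcdB n b.val : ZMod n) * b) := by
        rw [zsmul_eq_mul]; push_cast; ring
  _ = (c : ZMod n) * ((n.gcd b.val : ℕ) : ZMod n) := by rw [hbez]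
  _ = ((n.gcd b.val * c : ℕ) : ZMod n) := by push_cast; ring
  _ = a := by rw [← hc, hav]

lemma mem_zpowers_iff_orderOf_dvd_s16 [NeZero n] (x y : Multiplicative (ZMod n)) :
    x ∈ Subgroup.zpowers y ↔ orderOf x ∣ orderOf y := by
  constructor
  · intro hm
    have := (mem_powers_iff_mem_zpowers (x := y) (y := x)).mpr hm
    obtain ⟨k, rfl⟩ := (Submonoid.mem_powers_iff _ _).mp this
    exact orderOf_pow_dvd k
  · intro h
    have hx : orderOf x = addOrderOf x.toAdd := by
      rw [← orderOf_ofAdd_eq_addOrderOf]; rfl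
    have hy : orderOf y = addOrderOf y.toAdd := by
      rw [← orderOf_ofAdd_eq_addOrderOf]; rfl
    obtain ⟨k, hk⟩ := zmod_dvd_exists_zsmul x.toAdd y.toAdd (by rw [← hx, ← hy]; exact h)
    refine Subgroup.mem_zpowers_iff.mpr ⟨k, ?_⟩
    have : (y ^ k).toAdd = k • y.toAdd := by simp
    apply Multiplicative.toAdd.injective
    rw [this, hk]

lemma exists_orderOf_eq [NeZero n] {d : ℕ} (hd : d ∣ n) :
    ∃ x : Multiplicative (ZMod n), orderOf x = d := by
  have hn : n ≠ 0 := NeZero.ne n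
  refine ⟨Multiplicative.ofAdd ((n / d : ℕ) : ZMod n), ?_⟩
  rw [orderOf_ofAdd_eq_addOrderOf, ZMod.addOrderOf_coe _ hn]
  have h1 : n.gcd (n / d) = n / d := Nat.gcd_eq_right (Nat.div_dvd_of_dvd hd)
  rw [h1, Nat.div_div_self hd hn]

lemma powerGraph_adj_iff [NeZero n] (x y : Multiplicative (ZMod n)) :
    (powerGraph (Multiplicative (ZMod n))).Adj x y ↔
      x ≠ y ∧ (orderOf x ∣ orderOf y ∨ orderOf y ∣ orderOf x) := by
  unfold powerGraph
  simp only [mem_zpowers_iff_orderOf_dvd_s16]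

lemma card_orderOf_dvd_le [NeZero n] {m : ℕ} (hm : m ∣ n)
    (l : Finset (Multiplicative (ZMod n))) (hl : ∀ x ∈ l, orderOf x ∣ m) :
    l.card ≤ m := by
  classical
  obtain ⟨g, hg⟩ := exists_orderOf_eq hm
  have hsub : ∀ x ∈ l, x ∈ (Subgroup.zpowers g : Set (Multiplicative (ZMod n))).toFinset := by
    intro x hx
    rw [Set.mem_toFinset]
    exact (mem_zpowers_iff_orderOf_dvd_s16 x g).mpr (hg ▸ hl x hx)
  calc l.card ≤ (Subgroup.zpowers g : Set (Multiplicative (ZMod n))).toFinset.card :=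
        Finset.card_le_card hsub
  _ = Fintype.card (Subgroup.zpowers g) := Set.toFinset_card _
  _ = m := by rw [Fintype.card_zpowers, hg]

end ZModOrder

section Master
variable {n : ℕ}

lemma nonadj_of_orders [NeZero n] (u v : Multiplicative (ZMod n)) (ou ov : ℕ)
    (hu : orderOf u = ou) (hv : orderOf v = ov) (h1 : ¬ ou ∣ ov) (h2 : ¬ ov ∣ ou) :
    u ≠ v ∧ ¬ (powerGraph (Multiplicative (ZMod n))).Adj u v := by
  constructor
  · rintro rfl
    rw [hu] at hv
    exact h1 (hv ▸ dvd_refl ou)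
  · intro hadj
    rcases (powerGraph_adj_iff u v).mp hadj with ⟨-, hd | hd⟩
    · exact h1 (hu ▸ hv ▸ hd)
    · exact h2 (hu ▸ hv ▸ hd)

lemma master [NeZero n] (d t d' e s e' : ℕ)
    (hd : d ∣ n) (he : e ∣ n)
    (hd' : d / d.gcd t = d') (he' : e / e.gcd s = e')
    (ht : 1 ≤ t) (hs : 1 ≤ s)
    (hd2 : ¬ d ∣ 2) (hdt1 : ¬ d ∣ t - 1) (hdt2 : ¬ d ∣ t + 1)
    (he2 : ¬ e ∣ 2) (hes1 : ¬ e ∣ s - 1) (hes2 : ¬ e ∣ s + 1)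
    (c1 : ¬ d ∣ e) (c2 : ¬ e ∣ d) (c3 : ¬ d ∣ e') (c4 : ¬ e' ∣ d)
    (c5 : ¬ d' ∣ e) (c6 : ¬ e ∣ d') (c7 : ¬ d' ∣ e') (c8 : ¬ e' ∣ d') :
    CyclicallySeparable (powerGraph (Multiplicative (ZMod n))) := by
  obtain ⟨x, hx⟩ := exists_orderOf_eq hd
  obtain ⟨y, hy⟩ := exists_orderOf_eq he
  have hxi : orderOf x⁻¹ = d := by rw [orderOf_inv, hx]
  have hyi : orderOf y⁻¹ = e := by rw [orderOf_inv, hy]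
  have hxt : orderOf (x ^ t) = d' := by rw [orderOf_pow, hx, hd']
  have hys : orderOf (y ^ s) = e' := by rw [orderOf_pow, hy, he']
  -- triangle adjacencies
  have hab : (powerGraph (Multiplicative (ZMod n))).Adj x x⁻¹ := by
    refine ⟨?_, Or.inl ⟨-1, by simp⟩⟩
    intro h
    exact hd2 (hx ▸ orderOf_dvd_iff_pow_eq_one.mpr
      (by rw [pow_two]; exact mul_eq_one_iff_eq_inv.mpr h))
  have hbc : (powerGraph (Multiplicative (ZMod n))).Adj x⁻¹ (x ^ t) := by
    refine ⟨?_, Or.inr ⟨-(t : ℤ), by simp⟩⟩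
    intro h
    refine hdt2 (hx ▸ orderOf_dvd_iff_pow_eq_one.mpr ?_)
    rw [pow_succ, ← h]
    exact inv_mul_cancel _
  have hca : (powerGraph (Multiplicative (ZMod n))).Adj (x ^ t) x := by
    refine ⟨?_, Or.inl ⟨(t : ℤ), by simp⟩⟩
    intro h
    refine hdt1 (hx ▸ orderOf_dvd_iff_pow_eq_one.mpr ?_)
    have h1 : x ^ t = x ^ (t - 1) * x := by rw [← pow_succ, Nat.sub_add_cancel ht]
    have := h1.symm.trans h
    calc x ^ (t - 1) = x ^ (t - 1) * x * x⁻¹ := by group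
    _ = x * x⁻¹ := by rw [this]
    _ = 1 := mul_inv_cancel x
  have hde : (powerGraph (Multiplicative (ZMod n))).Adj y y⁻¹ := by
    refine ⟨?_, Or.inl ⟨-1, by simp⟩⟩
    intro h
    exact he2 (hy ▸ orderOf_dvd_iff_pow_eq_one.mpr
      (by rw [pow_two]; exact mul_eq_one_iff_eq_inv.mpr h))
  have hef : (powerGraph (Multiplicative (ZMod n))).Adj y⁻¹ (y ^ s) := by
    refine ⟨?_, Or.inr ⟨-(s : ℤ), by simp⟩⟩
    intro h
    refine hes2 (hy ▸ orderOf_dvd_iff_pow_eq_one.mpr ?_)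
    rw [pow_succ, ← h]
    exact inv_mul_cancel _
  have hfd : (powerGraph (Multiplicative (ZMod n))).Adj (y ^ s) y := by
    refine ⟨?_, Or.inl ⟨(s : ℤ), by simp⟩⟩
    intro h
    refine hes1 (hy ▸ orderOf_dvd_iff_pow_eq_one.mpr ?_)
    have h1 : y ^ s = y ^ (s - 1) * y := by rw [← pow_succ, Nat.sub_add_cancel hs]
    have := h1.symm.trans h
    calc y ^ (s - 1) = y ^ (s - 1) * y * y⁻¹ := by group
    _ = y * y⁻¹ := by rw [this]
    _ = 1 := mul_inv_cancel y
  refine sep_of_two_triangles hab hbc hca hde hef hfd ?_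
  intro u hu v hv
  simp only [Set.mem_insert_iff, Set.mem_singleton_iff] at hu hv
  rcases hu with rfl | rfl | rfl <;> rcases hv with rfl | rfl | rfl
  · exact nonadj_of_orders _ _ d e hx hy c1 c2
  · exact nonadj_of_orders _ _ d e hx hyi c1 c2
  · exact nonadj_of_orders _ _ d e' hx hys c3 c4
  · exact nonadj_of_orders _ _ d e hxi hy c1 c2
  · exact nonadj_of_orders _ _ d e hxi hyi c1 c2
  · exact nonadj_of_orders _ _ d e' hxi hys c3 c4
  · exact nonadj_of_orders _ _ d' e hxt hy c5 c6
  · exact nonadj_of_orders _ _ d' e hxt hyi c5 c6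
  · exact nonadj_of_orders _ _ d' e' hxt hys c7 c8

end Master

section Construct

lemma not_dvd_of_lt {a b : ℕ} (h1 : 0 < b) (h2 : b < a) : ¬ a ∣ b :=
  fun h => absurd (Nat.le_of_dvd h1 h) (by omega)

lemma eq_of_prime_divisors {n m : ℕ} (hm : m ∣ n) (h : ∀ p, p.Prime → (∃ k, n = m * (p * k)) → False) :
    n = m := by
  obtain ⟨k, hk⟩ := hm
  have hk1 : k = 1 := by
    rw [Nat.eq_one_iff_not_exists_prime_dvd]
    intro p hp hpk
    obtain ⟨k', rfl⟩ := hpk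
    exact h p hp ⟨k', by rw [hk]⟩
  rw [hk, hk1, mul_one]

lemma prime_ge_five {p : ℕ} (hp : p.Prime) (h2 : p ≠ 2) (h3 : p ≠ 3) : 5 ≤ p := by
  by_contra h
  have := hp.two_le
  interval_cases p
  · exact h2 rfl
  · exact h3 rfl
  · exact absurd hp (by decide)

lemma gcd_two_of_prime {r : ℕ} (hr : r.Prime) (h5 : 5 ≤ r) : r.gcd 2 = 1 :=
  (Nat.Prime.coprime_iff_not_dvd hr).mpr (not_dvd_of_lt (by norm_num) (by omega))

lemma two_ne_of_prime {r : ℕ} (hr : r.Prime) (h5 : 5 ≤ r) : ¬ 2 ∣ r := by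
  intro h
  rcases (Nat.Prime.eq_one_or_self_of_dvd hr 2 h) with h' | h' <;> omega

lemma three_ne_of_prime {r : ℕ} (hr : r.Prime) (h5 : 5 ≤ r) : ¬ 3 ∣ r := by
  intro h
  rcases (Nat.Prime.eq_one_or_self_of_dvd hr 3 h) with h' | h' <;> omega

lemma construct (n : ℕ) [NeZero n] (hn : 3 ≤ n)
    (h1 : 2 ≤ n.primeFactors.card)
    (h2 : ¬ ∃ p q : ℕ, p.Prime ∧ q.Prime ∧ p < q ∧ p ≤ 3 ∧ n = p * q)
    (h3 : n ≠ 12) :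
    CyclicallySeparable (powerGraph (Multiplicative (ZMod n))) := by
  have hn0 : n ≠ 0 := NeZero.ne n
  by_cases hR2 : ∃ r1 r2 : ℕ, r1.Prime ∧ r2.Prime ∧ 5 ≤ r1 ∧ 5 ≤ r2 ∧ r1 ≠ r2 ∧ r1 ∣ n ∧ r2 ∣ n
  · obtain ⟨r1, r2, hr1, hr2, h51, h52, hne, hd1, hd2⟩ := hR2
    refine master r1 2 r1 r2 2 r2 hd1 hd2 ?_ ?_ (by norm_num) (by norm_num)
      (not_dvd_of_lt (by norm_num) (by omega)) (by simpa using fun h => by omega)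
      (not_dvd_of_lt (by norm_num) (by omega))
      (not_dvd_of_lt (by norm_num) (by omega)) (by simpa using fun h => by omega)
      (not_dvd_of_lt (by norm_num) (by omega)) ?_ ?_ ?_ ?_ ?_ ?_ ?_ ?_
    · rw [gcd_two_of_prime hr1 h51, Nat.div_one]
    · rw [gcd_two_of_prime hr2 h52, Nat.div_one]
    all_goals
      intro h
      exact hne ((Nat.prime_dvd_prime_iff_eq (by assumption) (by assumption)).mp h ▸ rfl)
  · -- at most one prime ≥ 5 divides n
    by_cases hR1 : ∃ r : ℕ, r.Prime ∧ 5 ≤ r ∧ r ∣ n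
    · obtain ⟨r, hr, h5, hrn⟩ := hR1
      have hrpos : 0 < r := by omega
      have hclass : ∀ p, p.Prime → p ∣ n → p = 2 ∨ p = 3 ∨ p = r := by
        intro p hp hpn
        by_cases hp2 : p = 2
        · exact Or.inl hp2
        by_cases hp3 : p = 3
        · exact Or.inr (Or.inl hp3)
        by_cases hpr : p = r
        · exact Or.inr (Or.inr hpr)
        · exact absurd ⟨p, r, hp, hr, prime_ge_five hp hp2 hp3, h5, hpr, hpn, hrn⟩ hR2
      have hrgcd : r.gcd 2 = 1 := gcd_two_of_prime hr h5
      have hrrgcd : (r * r).gcd 2 = 1 := Nat.Coprime.mul hrgcd hrgcd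
      have hrr25 : 25 ≤ r * r := by
        calc 25 = 5 * 5 := rfl
        _ ≤ r * r := Nat.mul_le_mul (by omega) (by omega)
      have hrr5 : 5 * r ≤ r * r := Nat.mul_le_mul_right r (by omega)
      by_cases h2n : 2 ∣ n
      · by_cases h3n : 3 ∣ n
        · -- 6 ∣ n : use (6,3,2) and (r,2,r)
          have h6 : 6 ∣ n := (Nat.Coprime.mul_dvd_of_dvd_of_dvd (by norm_num) h2n h3n)
          refine master 6 3 2 r 2 r h6 hrn (by norm_num) ?_ (by norm_num) (by norm_num)
            (by norm_num) (by norm_num) (by norm_num)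
            (not_dvd_of_lt (by norm_num) (by omega)) (by simpa using fun h => by omega)
            (not_dvd_of_lt (by norm_num) (by omega)) ?_ ?_ ?_ ?_ ?_ ?_ ?_ ?_
          · rw [hrgcd, Nat.div_one]
          · intro h; exact two_ne_of_prime hr h5 (dvd_trans (by norm_num) h)
          · intro h
            have h6' := Nat.le_of_dvd (by norm_num) h
            interval_cases r
            · exact absurd h (by decide)
            · exact absurd hr (by decide)
          · intro h; exact two_ne_of_prime hr h5 (dvd_trans (by norm_num) h)
          · intro h
            have h6' := Nat.le_of_dvd (by norm_num) h
            interval_cases r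
            · exact absurd h (by decide)
            · exact absurd hr (by decide)
          · exact fun h => two_ne_of_prime hr h5 h
          · exact not_dvd_of_lt (by norm_num) (by omega)
          · exact fun h => two_ne_of_prime hr h5 h
          · exact not_dvd_of_lt (by norm_num) (by omega)
        · -- 2 ∣ n, ¬ 3
          by_cases h4n : 4 ∣ n
          · refine master 4 2 2 r 2 r h4n hrn (by norm_num) ?_ (by norm_num) (by norm_num)
              (by norm_num) (by norm_num) (by norm_num)
              (not_dvd_of_lt (by norm_num) (by omega)) (by simpa using fun h => by omega)
              (not_dvd_of_lt (by norm_num) (by omega)) ?_ ?_ ?_ ?_ ?_ ?_ ?_ ?_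
            · rw [hrgcd, Nat.div_one]
            · intro h; exact two_ne_of_prime hr h5 (dvd_trans (by norm_num) h)
            · exact not_dvd_of_lt (by norm_num) (by omega)
            · intro h; exact two_ne_of_prime hr h5 (dvd_trans (by norm_num) h)
            · exact not_dvd_of_lt (by norm_num) (by omega)
            · exact fun h => two_ne_of_prime hr h5 h
            · exact not_dvd_of_lt (by norm_num) (by omega)
            · exact fun h => two_ne_of_prime hr h5 h
            · exact not_dvd_of_lt (by norm_num) (by omega)
          · by_cases hrrn : r * r ∣ n
            · have h2r : 2 * r ∣ n := Nat.Coprime.mul_dvd_of_dvd_of_dvd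
                ((Nat.Prime.coprime_iff_not_dvd Nat.prime_two).mpr (two_ne_of_prime hr h5)) h2n hrn
              refine master (2 * r) r 2 (r * r) 2 (r * r) h2r hrrn ?_ ?_ (by omega) (by norm_num)
                (not_dvd_of_lt (by norm_num) (by omega))
                (not_dvd_of_lt (by omega) (by omega))
                (not_dvd_of_lt (by omega) (by omega))
                (not_dvd_of_lt (by norm_num) (by omega)) (by simpa using fun h => by omega)
                (not_dvd_of_lt (by norm_num) (by omega)) ?_ ?_ ?_ ?_ ?_ ?_ ?_ ?_
              · have hg : (2 * r).gcd r = r := by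
                  have := Nat.gcd_mul_right 2 r 1
                  simpa using this
                rw [hg, Nat.mul_div_cancel _ hrpos]
              · rw [hrrgcd, Nat.div_one]
              · intro h
                have : 2 ∣ r * r := dvd_trans ⟨r, rfl⟩ h
                rcases (Nat.Prime.dvd_mul Nat.prime_two).mp this with h' | h' <;>
                  exact two_ne_of_prime hr h5 h'
              · intro h; have := Nat.le_of_dvd (by omega) h; omega
              · intro h
                have : 2 ∣ r * r := dvd_trans ⟨r, rfl⟩ h
                rcases (Nat.Prime.dvd_mul Nat.prime_two).mp this with h' | h' <;>
                  exact two_ne_of_prime hr h5 h'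
              · intro h; have := Nat.le_of_dvd (by omega) h; omega
              · intro h
                rcases (Nat.Prime.dvd_mul Nat.prime_two).mp h with h' | h' <;>
                  exact two_ne_of_prime hr h5 h'
              · exact not_dvd_of_lt (by norm_num) (by omega)
              · intro h
                rcases (Nat.Prime.dvd_mul Nat.prime_two).mp h with h' | h' <;>
                  exact two_ne_of_prime hr h5 h'
              · exact not_dvd_of_lt (by norm_num) (by omega)
            · -- n = 2r, excluded
              exfalso
              have h2r : 2 * r ∣ n := Nat.Coprime.mul_dvd_of_dvd_of_dvd
                ((Nat.Prime.coprime_iff_not_dvd Nat.prime_two).mpr (two_ne_of_prime hr h5)) h2n hrn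
              have : n = 2 * r := by
                refine eq_of_prime_divisors h2r ?_
                intro p hp ⟨k, hk⟩
                have hpn : p ∣ n := ⟨2 * r * k, by rw [hk]; ring⟩
                rcases hclass p hp hpn with rfl | rfl | rfl
                · exact h4n ⟨r * k, by rw [hk]; ring⟩
                · exact h3n ⟨2 * r * k, by rw [hk]; ring⟩
                · exact hrrn ⟨2 * k, by rw [hk]; ring⟩
              exact h2 ⟨2, r, Nat.prime_two, hr, by omega, by omega, this⟩
      · by_cases h3n : 3 ∣ n
        · by_cases h9n : 9 ∣ n
          · refine master 9 2 9 r 2 r h9n hrn (by norm_num) ?_ (by norm_num) (by norm_num)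
              (by norm_num) (by norm_num) (by norm_num)
              (not_dvd_of_lt (by norm_num) (by omega)) (by simpa using fun h => by omega)
              (not_dvd_of_lt (by norm_num) (by omega)) ?_ ?_ ?_ ?_ ?_ ?_ ?_ ?_
            · rw [hrgcd, Nat.div_one]
            all_goals
              first
                | (intro h; exact three_ne_of_prime hr h5 (dvd_trans (by norm_num) h))
                | (intro h;
                   have h9' := Nat.le_of_dvd (by norm_num) h;
                   interval_cases r <;> first
                     | exact absurd h (by decide)
                     | exact absurd hr (by decide))
          · by_cases hrrn : r * r ∣ n
            · have h3r : 3 * r ∣ n := Nat.Coprime.mul_dvd_of_dvd_of_dvd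
                ((Nat.Prime.coprime_iff_not_dvd Nat.prime_three).mpr (three_ne_of_prime hr h5)) h3n hrn
              refine master (3 * r) r 3 (r * r) 2 (r * r) h3r hrrn ?_ ?_ (by omega) (by norm_num)
                (not_dvd_of_lt (by norm_num) (by omega))
                (not_dvd_of_lt (by omega) (by omega))
                (not_dvd_of_lt (by omega) (by omega))
                (not_dvd_of_lt (by norm_num) (by omega)) (by simpa using fun h => by omega)
                (not_dvd_of_lt (by norm_num) (by omega)) ?_ ?_ ?_ ?_ ?_ ?_ ?_ ?_
              · have hg : (3 * r).gcd r = r := by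
                  have := Nat.gcd_mul_right 3 r 1
                  simpa using this
                rw [hg, Nat.mul_div_cancel _ hrpos]
              · rw [hrrgcd, Nat.div_one]
              · intro h
                have : 3 ∣ r * r := dvd_trans ⟨r, rfl⟩ h
                rcases (Nat.Prime.dvd_mul Nat.prime_three).mp this with h' | h' <;>
                  exact three_ne_of_prime hr h5 h'
              · intro h; have := Nat.le_of_dvd (by omega) h; omega
              · intro h
                have : 3 ∣ r * r := dvd_trans ⟨r, rfl⟩ h
                rcases (Nat.Prime.dvd_mul Nat.prime_three).mp this with h' | h' <;>
                  exact three_ne_of_prime hr h5 h'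
              · intro h; have := Nat.le_of_dvd (by omega) h; omega
              · intro h
                rcases (Nat.Prime.dvd_mul Nat.prime_three).mp h with h' | h' <;>
                  exact three_ne_of_prime hr h5 h'
              · exact not_dvd_of_lt (by norm_num) (by omega)
              · intro h
                rcases (Nat.Prime.dvd_mul Nat.prime_three).mp h with h' | h' <;>
                  exact three_ne_of_prime hr h5 h'
              · exact not_dvd_of_lt (by norm_num) (by omega)
            · exfalso
              have h3r : 3 * r ∣ n := Nat.Coprime.mul_dvd_of_dvd_of_dvd
                ((Nat.Prime.coprime_iff_not_dvd Nat.prime_three).mpr (three_ne_of_prime hr h5)) h3n hrn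
              have : n = 3 * r := by
                refine eq_of_prime_divisors h3r ?_
                intro p hp ⟨k, hk⟩
                have hpn : p ∣ n := ⟨3 * r * k, by rw [hk]; ring⟩
                rcases hclass p hp hpn with rfl | rfl | rfl
                · exact h2n ⟨3 * r * k, by rw [hk]; ring⟩
                · exact h9n ⟨r * k, by rw [hk]; ring⟩
                · exact hrrn ⟨3 * k, by rw [hk]; ring⟩
              exact h2 ⟨3, r, Nat.prime_three, hr, by omega, by omega, this⟩
        · -- no 2, no 3: two distinct primes both ≥ 5 → contradiction with hR2
          exfalso
          obtain ⟨p, hp, q, hq, hpq⟩ := Finset.one_lt_card.mp h1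
          rw [Nat.mem_primeFactors] at hp hq
          refine hR2 ⟨p, q, hp.1, hq.1, ?_, ?_, hpq, hp.2.1, hq.2.1⟩
          · refine prime_ge_five hp.1 ?_ ?_ <;> rintro rfl
            · exact h2n hp.2.1
            · exact h3n hp.2.1
          · refine prime_ge_five hq.1 ?_ ?_ <;> rintro rfl
            · exact h2n hq.2.1
            · exact h3n hq.2.1
    · -- all prime factors in {2,3}
      have hclass : ∀ p, p.Prime → p ∣ n → p = 2 ∨ p = 3 := by
        intro p hp hpn
        by_cases hp2 : p = 2
        · exact Or.inl hp2
        by_cases hp3 : p = 3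
        · exact Or.inr hp3
        · exact absurd ⟨p, hp, prime_ge_five hp hp2 hp3, hpn⟩ hR1
      have h23 : 2 ∣ n ∧ 3 ∣ n := by
        obtain ⟨p, hp, q, hq, hpq⟩ := Finset.one_lt_card.mp h1
        rw [Nat.mem_primeFactors] at hp hq
        rcases hclass p hp.1 hp.2.1 with rfl | rfl <;>
          rcases hclass q hq.1 hq.2.1 with rfl | rfl
        · exact absurd rfl hpq
        · exact ⟨hp.2.1, hq.2.1⟩
        · exact ⟨hq.2.1, hp.2.1⟩
        · exact absurd rfl hpq
      obtain ⟨h2n, h3n⟩ := h23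
      by_cases h4n : 4 ∣ n
      · by_cases h9n : 9 ∣ n
        · exact master 4 2 2 9 2 9 h4n h9n (by norm_num) (by norm_num) (by norm_num)
            (by norm_num) (by norm_num) (by norm_num) (by norm_num) (by norm_num)
            (by norm_num) (by norm_num) (by norm_num) (by norm_num) (by norm_num)
            (by norm_num) (by norm_num) (by norm_num) (by norm_num) (by norm_num)
        · by_cases h8n : 8 ∣ n
          · have h12 : 12 ∣ n := Nat.Coprime.mul_dvd_of_dvd_of_dvd (by norm_num) h4n h3n
            exact master 8 3 8 12 4 3 h8n h12 (by norm_num) (by norm_num) (by norm_num)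
              (by norm_num) (by norm_num) (by norm_num) (by norm_num) (by norm_num)
              (by norm_num) (by norm_num) (by norm_num) (by norm_num) (by norm_num)
              (by norm_num) (by norm_num) (by norm_num) (by norm_num) (by norm_num)
          · exfalso
            have h12 : 12 ∣ n := Nat.Coprime.mul_dvd_of_dvd_of_dvd (by norm_num) h4n h3n
            refine h3 (eq_of_prime_divisors h12 ?_)
            intro p hp ⟨k, hk⟩
            have hpn : p ∣ n := ⟨12 * k, by rw [hk]; ring⟩
            rcases hclass p hp hpn with rfl | rfl
            · exact h8n ⟨3 * k, by rw [hk]; ring⟩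
            · exact h9n ⟨4 * k, by rw [hk]; ring⟩
      · by_cases h9n : 9 ∣ n
        · have h6 : 6 ∣ n := Nat.Coprime.mul_dvd_of_dvd_of_dvd (by norm_num) h2n h3n
          exact master 6 3 2 9 2 9 h6 h9n (by norm_num) (by norm_num) (by norm_num)
            (by norm_num) (by norm_num) (by norm_num) (by norm_num) (by norm_num)
            (by norm_num) (by norm_num) (by norm_num) (by norm_num) (by norm_num)
            (by norm_num) (by norm_num) (by norm_num) (by norm_num) (by norm_num)
        · exfalso
          have h6 : 6 ∣ n := Nat.Coprime.mul_dvd_of_dvd_of_dvd (by norm_num) h2n h3n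
          have hn6 : n = 6 := by
            refine eq_of_prime_divisors h6 ?_
            intro p hp ⟨k, hk⟩
            have hpn : p ∣ n := ⟨6 * k, by rw [hk]; ring⟩
            rcases hclass p hp hpn with rfl | rfl
            · exact h4n ⟨3 * k, by rw [hk]; ring⟩
            · exact h9n ⟨2 * k, by rw [hk]; ring⟩
          exact h2 ⟨2, 3, Nat.prime_two, Nat.prime_three, by omega, by omega, by omega⟩


end Construct

section Negative
variable {n : ℕ}

lemma orderOf_dvd_n [NeZero n] (x : Multiplicative (ZMod n)) : orderOf x ∣ n := by
  have hx : orderOf x = addOrderOf x.toAdd := by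
    rw [← orderOf_ofAdd_eq_addOrderOf]; rfl
  have hbv : ((x.toAdd.val : ℕ) : ZMod n) = x.toAdd := ZMod.natCast_rightInverse _
  rw [hx, ← hbv, ZMod.addOrderOf_coe _ (NeZero.ne n)]
  exact Nat.div_dvd_of_dvd (Nat.gcd_dvd_left _ _)

lemma adj_mk [NeZero n] {u v : Multiplicative (ZMod n)} (hne : u ≠ v)
    (h : orderOf u ∣ orderOf v ∨ orderOf v ∣ orderOf u) :
    (powerGraph (Multiplicative (ZMod n))).Adj u v :=
  (powerGraph_adj_iff u v).mpr ⟨hne, h⟩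

lemma not_sep_primepow {p : ℕ} (hp : p.Prime) (hn : ∃ a, n = p ^ a) [NeZero n] :
    ¬ CyclicallySeparable (powerGraph (Multiplicative (ZMod n))) := by
  obtain ⟨a, rfl⟩ := hn
  apply not_sep_of_complete
  intro x y hxy
  obtain ⟨i, hi, hoi⟩ := (Nat.dvd_prime_pow hp).mp (orderOf_dvd_n x)
  obtain ⟨j, hj, hoj⟩ := (Nat.dvd_prime_pow hp).mp (orderOf_dvd_n y)
  refine adj_mk hxy ?_
  rcases le_total i j with h | h
  · exact Or.inl (hoi ▸ hoj ▸ pow_dvd_pow p h)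
  · exact Or.inr (hoj ▸ hoi ▸ pow_dvd_pow p h)

lemma dvd_prime_mul {p q o : ℕ} (hp : p.Prime) (hq : q.Prime) (h : o ∣ p * q) :
    o = 1 ∨ o = p ∨ o = q ∨ o = p * q := by
  by_cases hpo : p ∣ o
  · obtain ⟨o', rfl⟩ := hpo
    have ho' : o' ∣ q := (mul_dvd_mul_iff_left hp.pos.ne').mp h
    rcases (Nat.Prime.eq_one_or_self_of_dvd hq o' ho') with rfl | rfl
    · exact Or.inr (Or.inl (mul_one p))
    · exact Or.inr (Or.inr (Or.inr rfl))
  · have hco : Nat.Coprime o p := Nat.Coprime.symm (hp.coprime_iff_not_dvd.mpr hpo)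
    have hoq : o ∣ q := (Nat.Coprime.dvd_of_dvd_mul_left hco) h
    rcases (Nat.Prime.eq_one_or_self_of_dvd hq o hoq) with rfl | rfl
    · exact Or.inl rfl
    · exact Or.inr (Or.inr (Or.inl rfl))

lemma supp_order_ne_one_ne_n [NeZero n]
    {w1 w2 : Multiplicative (ZMod n)}
    {c1 : (powerGraph (Multiplicative (ZMod n))).Walk w1 w1}
    {c2 : (powerGraph (Multiplicative (ZMod n))).Walk w2 w2}
    (hcross : ∀ x ∈ c1.support, ∀ y ∈ c2.support,
      x ≠ y ∧ ¬(powerGraph (Multiplicative (ZMod n))).Adj x y) :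
    ∀ x ∈ c1.support, orderOf x ≠ 1 ∧ orderOf x ≠ n := by
  intro x hx
  obtain ⟨hne, hnadj⟩ := hcross x hx w2 c2.start_mem_support
  constructor
  · intro h1
    exact hnadj (adj_mk hne (Or.inl (by rw [h1]; exact one_dvd _)))
  · intro h1
    exact hnadj (adj_mk hne (Or.inr (by rw [h1]; exact orderOf_dvd_n w2)))

end Negative

section Negative2
variable {n : ℕ}

lemma cycle_class {V : Type*} {Γ : SimpleGraph V} {O1 O2 : Set V}
    (hdisj : ∀ a b, a ∈ O1 → b ∈ O2 → ¬Γ.Adj a b) {w : V} (c : Γ.Walk w w)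
    (hsupp : ∀ x ∈ c.support, x ∈ O1 ∪ O2) :
    (∀ x ∈ c.support, x ∈ O1) ∨ (∀ x ∈ c.support, x ∈ O2) := by
  rcases hsupp w c.start_mem_support with hw | hw
  · exact Or.inl (walk_support_stay hdisj c hsupp hw)
  · refine Or.inr (walk_support_stay (C1 := O2) (C2 := O1)
      (fun a b ha hb hadj => hdisj b a hb ha hadj.symm) c
      (fun x hx => (hsupp x hx).elim Or.inr Or.inl) hw)

lemma card_four {α : Type*} [DecidableEq α] {a b c d : α}
    (hab : a ≠ b) (hac : a ≠ c) (had : a ≠ d) (hbc : b ≠ c) (hbd : b ≠ d) (hcd : c ≠ d) :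
    ({a, b, c, d} : Finset α).card = 4 := by
  rw [Finset.card_insert_of_notMem (by simp [hab, hac, had]),
      Finset.card_insert_of_notMem (by simp [hbc, hbd]),
      Finset.card_insert_of_notMem (by simp [hcd]), Finset.card_singleton]

lemma card_five {α : Type*} [DecidableEq α] {a b c d e : α}
    (hab : a ≠ b) (hac : a ≠ c) (had : a ≠ d) (hae : a ≠ e)
    (hbc : b ≠ c) (hbd : b ≠ d) (hbe : b ≠ e) (hcd : c ≠ d) (hce : c ≠ e) (hde : d ≠ e) :
    ({a, b, c, d, e} : Finset α).card = 5 := by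
  rw [Finset.card_insert_of_notMem (by simp [hab, hac, had, hae]),
      card_four hbc hbd hbe hcd hce hde]

lemma card_six {α : Type*} [DecidableEq α] {a b c d e f : α}
    (hab : a ≠ b) (hac : a ≠ c) (had : a ≠ d) (hae : a ≠ e) (haf : a ≠ f)
    (hbc : b ≠ c) (hbd : b ≠ d) (hbe : b ≠ e) (hbf : b ≠ f)
    (hcd : c ≠ d) (hce : c ≠ e) (hcf : c ≠ f) (hde : d ≠ e) (hdf : d ≠ f) (hef : e ≠ f) :
    ({a, b, c, d, e, f} : Finset α).card = 6 := by
  rw [Finset.card_insert_of_notMem (by simp [hab, hac, had, hae, haf]),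
      card_five hbc hbd hbe hbf hcd hce hcf hde hdf hef]

lemma ne_one_of_orderOf {x : Multiplicative (ZMod n)} {m : ℕ} (h : orderOf x = m)
    (hm : m ≠ 1) : x ≠ 1 := by
  intro h1
  rw [h1, orderOf_one] at h
  exact hm h.symm

lemma not_sep_pq {p q : ℕ} (hp : p.Prime) (hq : q.Prime) (hlt : p < q) (hp3 : p ≤ 3)
    (hn : n = p * q) [NeZero n] :
    ¬ CyclicallySeparable (powerGraph (Multiplicative (ZMod n))) := by
  classical
  intro hsep
  obtain ⟨w1, w2, c1, c2, hc1, hc2, hcross⟩ := exists_cycles_of_sep hsep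
  have hcross' : ∀ y ∈ c2.support, ∀ x ∈ c1.support,
      y ≠ x ∧ ¬(powerGraph (Multiplicative (ZMod n))).Adj y x :=
    fun y hy x hx => ⟨(hcross x hx y hy).1.symm, fun h => (hcross x hx y hy).2 h.symm⟩
  have ho1 := supp_order_ne_one_ne_n hcross
  have ho2 := supp_order_ne_one_ne_n hcross'
  have hpq : p ≠ q := by omega
  have horder : ∀ x : Multiplicative (ZMod n), orderOf x ≠ 1 → orderOf x ≠ n →
      orderOf x = p ∨ orderOf x = q := by
    intro x hx1 hxn
    rcases dvd_prime_mul (o := orderOf x) hp hq (show orderOf x ∣ p * q by rw [← hn]; exact orderOf_dvd_n x) with h | h | h | h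
    · exact absurd h hx1
    · exact Or.inl h
    · exact Or.inr h
    · exact absurd (hn ▸ h) hxn
  set O1 : Set (Multiplicative (ZMod n)) := {x | orderOf x = p} with hO1
  set O2 : Set (Multiplicative (ZMod n)) := {x | orderOf x = q} with hO2
  have hdisj : ∀ a b, a ∈ O1 → b ∈ O2 → ¬(powerGraph (Multiplicative (ZMod n))).Adj a b := by
    intro a b ha hb hadj
    have ha' : orderOf a = p := ha
    have hb' : orderOf b = q := hb
    rcases (powerGraph_adj_iff _ _).mp hadj with ⟨-, h | h⟩
    · rw [ha', hb'] at h
      exact hpq ((Nat.prime_dvd_prime_iff_eq hp hq).mp h)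
    · rw [ha', hb'] at h
      exact hpq ((Nat.prime_dvd_prime_iff_eq hq hp).mp h).symm
  have hsupp1 : ∀ x ∈ c1.support, x ∈ O1 ∪ O2 := by
    intro x hx
    rcases horder x (ho1 x hx).1 (ho1 x hx).2 with h | h
    · exact Or.inl h
    · exact Or.inr h
  have hsupp2 : ∀ x ∈ c2.support, x ∈ O1 ∪ O2 := by
    intro x hx
    rcases horder x (ho2 x hx).1 (ho2 x hx).2 with h | h
    · exact Or.inl h
    · exact Or.inr h
  have hcount : ∀ (w : Multiplicative (ZMod n))
      (c : (powerGraph (Multiplicative (ZMod n))).Walk w w), c.IsCycle →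
      (∀ x ∈ c.support, x ∈ O1) → False := by
    intro w c hc hall
    obtain ⟨x1, x2, x3, hm1, hm2, hm3, h12, h13, h23⟩ := IsCycle.exists_three hc
    have hx1 : orderOf x1 = p := hall x1 hm1
    have hx2 : orderOf x2 = p := hall x2 hm2
    have hx3 : orderOf x3 = p := hall x3 hm3
    have hpdvd : p ∣ n := by rw [hn]; exact ⟨q, rfl⟩
    have hb := card_orderOf_dvd_le hpdvd {1, x1, x2, x3} (by
      intro x hx
      simp only [Finset.mem_insert, Finset.mem_singleton] at hx
      rcases hx with rfl | rfl | rfl | rfl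
      · simp
      · rw [hx1]
      · rw [hx2]
      · rw [hx3])
    rw [card_four (ne_one_of_orderOf hx1 hp.ne_one).symm (ne_one_of_orderOf hx2 hp.ne_one).symm
      (ne_one_of_orderOf hx3 hp.ne_one).symm h12 h13 h23] at hb
    omega
  rcases cycle_class hdisj c1 hsupp1 with h1 | h1
  · exact hcount w1 c1 hc1 h1
  rcases cycle_class hdisj c2 hsupp2 with h2 | h2
  · exact hcount w2 c2 hc2 h2
  · have hw1 : orderOf w1 = q := h1 w1 c1.start_mem_support
    have hw2 : orderOf w2 = q := h2 w2 c2.start_mem_support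
    obtain ⟨hne, hnadj⟩ := hcross w1 c1.start_mem_support w2 c2.start_mem_support
    exact hnadj (adj_mk hne (Or.inl (by rw [hw1, hw2])))

end Negative2

section Negative3

lemma dvd_twelve {o : ℕ} (h : o ∣ 12) : o = 1 ∨ o = 2 ∨ o = 3 ∨ o = 4 ∨ o = 6 ∨ o = 12 := by
  have h12 := Nat.le_of_dvd (by norm_num) h
  have h0 : o ≠ 0 := by rintro rfl; norm_num at h
  interval_cases o <;> revert h <;> decide

lemma not_sep_twelve : ¬ CyclicallySeparable (powerGraph (Multiplicative (ZMod 12))) := by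
  classical
  intro hsep
  obtain ⟨w1, w2, c1, c2, hc1, hc2, hcross⟩ := exists_cycles_of_sep hsep
  have hcross' : ∀ y ∈ c2.support, ∀ x ∈ c1.support,
      y ≠ x ∧ ¬(powerGraph (Multiplicative (ZMod 12))).Adj y x :=
    fun y hy x hx => ⟨(hcross x hx y hy).1.symm, fun h => (hcross x hx y hy).2 h.symm⟩
  have ho1 := supp_order_ne_one_ne_n hcross
  have ho2 := supp_order_ne_one_ne_n hcross'
  have horder : ∀ x : Multiplicative (ZMod 12), orderOf x ≠ 1 → orderOf x ≠ 12 →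
      orderOf x = 2 ∨ orderOf x = 3 ∨ orderOf x = 4 ∨ orderOf x = 6 := by
    intro x hx1 hxn
    rcases dvd_twelve (orderOf_dvd_n x) with h | h | h | h | h | h
    · exact absurd h hx1
    · exact Or.inl h
    · exact Or.inr (Or.inl h)
    · exact Or.inr (Or.inr (Or.inl h))
    · exact Or.inr (Or.inr (Or.inr h))
    · exact absurd h hxn
  obtain ⟨z, hz⟩ := exists_orderOf_eq (n := 12) (d := 2) (by norm_num)
  have aux : ∀ (wa wb : Multiplicative (ZMod 12))
      (ca : (powerGraph (Multiplicative (ZMod 12))).Walk wa wa)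
      (cb : (powerGraph (Multiplicative (ZMod 12))).Walk wb wb), cb.IsCycle →
      (∀ x ∈ ca.support, ∀ y ∈ cb.support,
        x ≠ y ∧ ¬(powerGraph (Multiplicative (ZMod 12))).Adj x y) →
      (∀ y ∈ cb.support, orderOf y ≠ 1 ∧ orderOf y ≠ 12) →
      ∀ x ∈ ca.support, orderOf x ≠ 6 := by
    intro wa wb ca cb hcb hcr hob x hx h6
    have hall4 : ∀ y ∈ cb.support, orderOf y = 4 := by
      intro y hy
      obtain ⟨hne, hnadj⟩ := hcr x hx y hy
      rcases horder y (hob y hy).1 (hob y hy).2 with h | h | h | h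
      · exact absurd (adj_mk hne (Or.inr (by rw [h, h6]; norm_num))) hnadj
      · exact absurd (adj_mk hne (Or.inr (by rw [h, h6]; norm_num))) hnadj
      · exact h
      · exact absurd (adj_mk hne (Or.inl (by rw [h, h6]))) hnadj
    obtain ⟨y1, y2, y3, hm1, hm2, hm3, h12, h13, h23⟩ := IsCycle.exists_three hcb
    have hy1 := hall4 y1 hm1
    have hy2 := hall4 y2 hm2
    have hy3 := hall4 y3 hm3
    have hzne : ∀ yy : Multiplicative (ZMod 12), orderOf yy = 4 → z ≠ yy := by
      intro yy hyy hh
      rw [hh, hyy] at hz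
      norm_num at hz
    have hb := card_orderOf_dvd_le (m := 4) (by norm_num) {1, z, y1, y2, y3} (by
      intro t ht
      simp only [Finset.mem_insert, Finset.mem_singleton] at ht
      rcases ht with rfl | rfl | rfl | rfl | rfl
      · simp
      · rw [hz]; norm_num
      · rw [hy1]
      · rw [hy2]
      · rw [hy3])
    rw [card_five (ne_one_of_orderOf hz (by norm_num)).symm
      (ne_one_of_orderOf hy1 (by norm_num)).symm (ne_one_of_orderOf hy2 (by norm_num)).symm
      (ne_one_of_orderOf hy3 (by norm_num)).symm
      (hzne y1 hy1) (hzne y2 hy2) (hzne y3 hy3) h12 h13 h23] at hb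
    omega
  have no6_1 : ∀ x ∈ c1.support, orderOf x ≠ 6 := aux w1 w2 c1 c2 hc2 hcross ho2
  have no6_2 : ∀ x ∈ c2.support, orderOf x ≠ 6 := aux w2 w1 c2 c1 hc1 hcross' ho1
  set O1 : Set (Multiplicative (ZMod 12)) := {x | orderOf x = 2 ∨ orderOf x = 4} with hO1
  set O2 : Set (Multiplicative (ZMod 12)) := {x | orderOf x = 3} with hO2
  have hdisj : ∀ a b, a ∈ O1 → b ∈ O2 → ¬(powerGraph (Multiplicative (ZMod 12))).Adj a b := by
    intro a b ha hb hadj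
    have hb' : orderOf b = 3 := hb
    rcases (powerGraph_adj_iff _ _).mp hadj with ⟨-, h | h⟩ <;>
      rcases (ha : orderOf a = 2 ∨ orderOf a = 4) with ha' | ha' <;>
        rw [ha', hb'] at h <;> norm_num at h
  have hsupp : ∀ (w : Multiplicative (ZMod 12))
      (c : (powerGraph (Multiplicative (ZMod 12))).Walk w w),
      (∀ x ∈ c.support, orderOf x ≠ 1 ∧ orderOf x ≠ 12) →
      (∀ x ∈ c.support, orderOf x ≠ 6) → ∀ x ∈ c.support, x ∈ O1 ∪ O2 := by
    intro w c hone h6 x hx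
    rcases horder x (hone x hx).1 (hone x hx).2 with h | h | h | h
    · exact Or.inl (Or.inl h)
    · exact Or.inr h
    · exact Or.inl (Or.inr h)
    · exact absurd h (h6 x hx)
  have hcount3 : ∀ (w : Multiplicative (ZMod 12))
      (c : (powerGraph (Multiplicative (ZMod 12))).Walk w w), c.IsCycle →
      (∀ x ∈ c.support, x ∈ O2) → False := by
    intro w c hc hall
    obtain ⟨x1, x2, x3, hm1, hm2, hm3, h12, h13, h23⟩ := IsCycle.exists_three hc
    have hx1 : orderOf x1 = 3 := hall x1 hm1
    have hx2 : orderOf x2 = 3 := hall x2 hm2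
    have hx3 : orderOf x3 = 3 := hall x3 hm3
    have hb := card_orderOf_dvd_le (n := 12) (m := 3) (by norm_num) {1, x1, x2, x3} (by
      intro t ht
      simp only [Finset.mem_insert, Finset.mem_singleton] at ht
      rcases ht with rfl | rfl | rfl | rfl
      · simp
      · rw [hx1]
      · rw [hx2]
      · rw [hx3])
    rw [card_four (ne_one_of_orderOf hx1 (by norm_num)).symm
      (ne_one_of_orderOf hx2 (by norm_num)).symm (ne_one_of_orderOf hx3 (by norm_num)).symm
      h12 h13 h23] at hb
    omega
  rcases cycle_class hdisj c1 (hsupp w1 c1 ho1 no6_1) with h1 | h1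
  · rcases cycle_class hdisj c2 (hsupp w2 c2 ho2 no6_2) with h2 | h2
    · -- both in O1 : six distinct elements of order dividing 4
      obtain ⟨x1, x2, x3, hm1, hm2, hm3, hx12, hx13, hx23⟩ := IsCycle.exists_three hc1
      obtain ⟨y1, y2, y3, hn1, hn2, hn3, hy12, hy13, hy23⟩ := IsCycle.exists_three hc2
      have hdvd4 : ∀ t : Multiplicative (ZMod 12), t ∈ O1 → orderOf t ∣ 4 := by
        intro t ht
        rcases (ht : orderOf t = 2 ∨ orderOf t = 4) with h | h <;> rw [h] <;> norm_num
      have hb := card_orderOf_dvd_le (n := 12) (m := 4) (by norm_num)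
        {x1, x2, x3, y1, y2, y3} (by
          intro t ht
          simp only [Finset.mem_insert, Finset.mem_singleton] at ht
          rcases ht with h | h | h | h | h | h
          · rw [h]; exact hdvd4 _ (h1 x1 hm1)
          · rw [h]; exact hdvd4 _ (h1 x2 hm2)
          · rw [h]; exact hdvd4 _ (h1 x3 hm3)
          · rw [h]; exact hdvd4 _ (h2 y1 hn1)
          · rw [h]; exact hdvd4 _ (h2 y2 hn2)
          · rw [h]; exact hdvd4 _ (h2 y3 hn3))
      rw [card_six hx12 hx13 (hcross x1 hm1 y1 hn1).1 (hcross x1 hm1 y2 hn2).1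
        (hcross x1 hm1 y3 hn3).1 hx23 (hcross x2 hm2 y1 hn1).1 (hcross x2 hm2 y2 hn2).1
        (hcross x2 hm2 y3 hn3).1 (hcross x3 hm3 y1 hn1).1 (hcross x3 hm3 y2 hn2).1
        (hcross x3 hm3 y3 hn3).1 hy12 hy13 hy23] at hb
      omega
    · exact hcount3 w2 c2 hc2 h2
  · exact hcount3 w1 c1 hc1 h1

end Negative3

section P1
lemma P1 (n : ℕ) [NeZero n] (hn : 3 ≤ n) :
    CyclicallySeparable (powerGraph (Multiplicative (ZMod n))) ↔
      (2 ≤ n.primeFactors.card ∧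
       (¬ ∃ p q : ℕ, p.Prime ∧ q.Prime ∧ p < q ∧ p ≤ 3 ∧ n = p * q) ∧
       n ≠ 12) := by
  constructor
  · intro hsep
    by_contra hcond
    rcases not_and_or.mp hcond with hA | hBC
    · -- n is a prime power
      obtain ⟨p, hp, hpn⟩ := Nat.exists_prime_and_dvd (show n ≠ 1 by omega)
      have huniq : ∀ {q : ℕ}, q.Prime → q ∣ n → q = p := by
        intro q hq hqn
        by_contra hne
        refine hA (Finset.one_lt_card.mpr ⟨q, ?_, p, ?_, hne⟩) <;>
          rw [Nat.mem_primeFactors] <;>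
          exact ⟨by assumption, by assumption, by omega⟩
      have := Nat.eq_prime_pow_of_unique_prime_dvd (show n ≠ 0 by omega) huniq
      exact absurd hsep (not_sep_primepow hp ⟨_, this⟩)
    rcases not_and_or.mp hBC with hB | hC
    · rw [not_not] at hB
      obtain ⟨p, q, hp, hq, hlt, hp3, hnpq⟩ := hB
      exact absurd hsep (not_sep_pq hp hq hlt hp3 hnpq)
    · rw [not_not] at hC
      subst hC
      exact not_sep_twelve hsep
  · rintro ⟨h1, h2, h3⟩
    exact construct n hn h1 h2 h3
end P1

section Dihedral
variable {n : ℕ}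

open DihedralGroup

/-- rotations as a monoid hom -/
def rHom (n : ℕ) : Multiplicative (ZMod n) →* DihedralGroup n where
  toFun := fun i => DihedralGroup.r i.toAdd
  map_one' := by rw [DihedralGroup.one_def]; rfl
  map_mul' := by
    intro a b
    rw [DihedralGroup.r_mul_r]
    rfl

lemma rHom_injective : Function.Injective (rHom n) := by
  intro a b h
  have : a.toAdd = b.toAdd := by injection h
  exact Multiplicative.toAdd.injective this

lemma rHom_zpow (x : Multiplicative (ZMod n)) (m : ℤ) :
    (DihedralGroup.r x.toAdd) ^ m = rHom n (x ^ m) := by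
  rw [map_zpow]; rfl

lemma r_zpow_ne_sr (i k : ZMod n) (m : ℤ) : (DihedralGroup.r i) ^ m ≠ DihedralGroup.sr k := by
  have h1 : (DihedralGroup.r i) ^ m = rHom n ((Multiplicative.ofAdd i) ^ m) := by
    rw [map_zpow]; rfl
  rw [h1]
  show DihedralGroup.r _ ≠ _
  simp

lemma sr_zpow_cases (j : ZMod n) (m : ℤ) :
    (DihedralGroup.sr j) ^ m = 1 ∨ (DihedralGroup.sr j) ^ m = DihedralGroup.sr j := by
  have h2 : (DihedralGroup.sr j) ^ (2 : ℤ) = 1 := by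
    rw [show (2:ℤ) = 1 + 1 by ring, zpow_add, zpow_one]
    exact DihedralGroup.sr_mul_self j
  rcases Int.even_or_odd m with ⟨l, hl⟩ | ⟨l, hl⟩
  · left
    rw [hl, ← two_mul, zpow_mul, h2, one_zpow]
  · right
    rw [hl, zpow_add, zpow_one, zpow_mul, h2, one_zpow, one_mul]

lemma adj_sr {k : ZMod n} {y : DihedralGroup n}
    (h : (powerGraph (DihedralGroup n)).Adj (DihedralGroup.sr k) y) : y = 1 := by
  obtain ⟨hne, hmem | hmem⟩ := h
  · obtain ⟨m, hm⟩ := Subgroup.mem_zpowers_iff.mp hmem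
    cases y with
    | r j => exact absurd hm (r_zpow_ne_sr j k m)
    | sr j =>
      rcases sr_zpow_cases j m with h1 | h1
      · rw [h1] at hm
        rw [DihedralGroup.one_def] at hm
        cases hm
      · rw [h1] at hm
        exact absurd hm.symm hne
  · obtain ⟨m, hm⟩ := Subgroup.mem_zpowers_iff.mp hmem
    rcases sr_zpow_cases k m with h1 | h1
    · rw [h1] at hm; exact hm.symm
    · rw [h1] at hm; exact absurd hm hne

lemma cycle_cons_decomp {V : Type*} {Γ : SimpleGraph V} {w : V} (c : Γ.Walk w w)
    (hc : c.IsCycle) :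
    ∃ (y : V) (h : Γ.Adj w y) (p : Γ.Walk y w),
      p.IsPath ∧ s(w, y) ∉ p.edges := by
  cases c with
  | nil => exact absurd hc (by simp)
  | cons h p => exact ⟨_, h, p, (SimpleGraph.Walk.cons_isCycle_iff p h).mp hc⟩

lemma sr_not_in_cycle {w : DihedralGroup n} {c : (powerGraph (DihedralGroup n)).Walk w w}
    (hc : c.IsCycle) {k : ZMod n} (hk : DihedralGroup.sr k ∈ c.support) : False := by
  classical
  have hc2 := hc.rotate hk
  obtain ⟨y, hadj, p, hpath, hedge⟩ := cycle_cons_decomp _ hc2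
  have hy : y = 1 := adj_sr hadj
  subst hy
  have hne : (DihedralGroup.sr k : DihedralGroup n) ≠ 1 := by
    rw [DihedralGroup.one_def]; exact fun h => by cases h
  obtain ⟨z, hadj2, q, hq⟩ := p.reverse.exists_eq_cons_of_ne hne
  have hz : z = 1 := adj_sr hadj2
  subst hz
  have hmem : s(DihedralGroup.sr k, (1 : DihedralGroup n)) ∈ p.reverse.edges := by
    rw [hq]
    simp
  rw [SimpleGraph.Walk.edges_reverse, List.mem_reverse] at hmem
  exact hedge hmem

end Dihedral

section P2sec
variable {n : ℕ}

lemma mem_zpowers_map {G H : Type*} [Group G] [Group H] (f : G →* H)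
    (hf : Function.Injective f) (x y : G) :
    f x ∈ Subgroup.zpowers (f y) ↔ x ∈ Subgroup.zpowers y := by
  rw [Subgroup.mem_zpowers_iff, Subgroup.mem_zpowers_iff]
  constructor
  · rintro ⟨k, hk⟩
    exact ⟨k, hf (by rw [map_zpow, hk])⟩
  · rintro ⟨k, hk⟩
    exact ⟨k, by rw [← map_zpow, hk]⟩

lemma powerGraph_adj_hom {G H : Type*} [Group G] [Group H] (f : G →* H)
    (hf : Function.Injective f) (x y : G) :
    (powerGraph H).Adj (f x) (f y) ↔ (powerGraph G).Adj x y := by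
  unfold powerGraph
  simp only
  rw [mem_zpowers_map f hf, mem_zpowers_map f hf, hf.ne_iff]

/-- iso between induced subgraphs of power graphs along an injective hom -/
noncomputable def isoInduce {G H : Type*} [Group G] [Group H] (f : G →* H) (hf : Function.Injective f)
    (A : Set G) : (powerGraph G).induce A ≃g (powerGraph H).induce (f '' A) where
  toEquiv := Equiv.Set.image f A hf
  map_rel_iff' := by
    intro x y
    rw [induce_adj', induce_adj']
    exact powerGraph_adj_hom f hf x.1 y.1

lemma P2 (n : ℕ) [NeZero n] :
    CyclicallySeparable (powerGraph (DihedralGroup n)) ↔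
      CyclicallySeparable (powerGraph (Multiplicative (ZMod n))) := by
  constructor
  · intro hsep
    obtain ⟨w1, w2, c1, c2, hc1, hc2, hcross⟩ := exists_cycles_of_sep hsep
    set AD : Set (DihedralGroup n) := {x | x ∈ c1.support ∨ x ∈ c2.support} with hAD
    have hrot : ∀ x ∈ AD, x ∈ Set.range (rHom n) := by
      rintro x (hx | hx)
      · cases x with
        | r i => exact ⟨Multiplicative.ofAdd i, rfl⟩
        | sr k => exact absurd hx (fun hh => sr_not_in_cycle hc1 hh)
      · cases x with
        | r i => exact ⟨Multiplicative.ofAdd i, rfl⟩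
        | sr k => exact absurd hx (fun hh => sr_not_in_cycle hc2 hh)
    set AC : Set (Multiplicative (ZMod n)) := (rHom n) ⁻¹' AD with hAC
    have himg : (rHom n) '' AC = AD := Set.image_preimage_eq_of_subset hrot
    have hw1 : w1 ∈ (rHom n) '' AC := by rw [himg]; exact Or.inl c1.start_mem_support
    have hw2 : w2 ∈ (rHom n) '' AC := by rw [himg]; exact Or.inr c2.start_mem_support
    have hsub1 : ∀ x ∈ c1.support, x ∈ ((rHom n) '' AC : Set (DihedralGroup n)) := by
      intro x hx; rw [himg]; exact Or.inl hx
    have hsub2 : ∀ x ∈ c2.support, x ∈ ((rHom n) '' AC : Set (DihedralGroup n)) := by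
      intro x hx; rw [himg]; exact Or.inr hx
    have hwitness : ∃ u v, ¬((powerGraph (DihedralGroup n)).induce ((rHom n) '' AC)).Reachable u v ∧
        InCyclicComp ((powerGraph (DihedralGroup n)).induce ((rHom n) '' AC)) u ∧
        InCyclicComp ((powerGraph (DihedralGroup n)).induce ((rHom n) '' AC)) v := by
      refine ⟨⟨w1, hw1⟩, ⟨w2, hw2⟩, ?_, ?_, ?_⟩
      · rintro ⟨p⟩
        have hstay := walk_support_stay
          (Γ := (powerGraph (DihedralGroup n)).induce ((rHom n) '' AC))
          (C1 := {x | x.1 ∈ c1.support}) (C2 := {x | x.1 ∈ c2.support})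
          (by
            rintro a b ha hb hadj
            exact (hcross a.1 ha b.1 hb).2 (induce_adj'.mp hadj))
          p
          (by
            intro x _
            have h2 : (x : DihedralGroup n) ∈ AD := by rw [← himg]; exact x.2
            rcases h2 with h | h
            · exact Or.inl h
            · exact Or.inr h)
          c1.start_mem_support
        have hend : ((⟨w2, hw2⟩ : ↥((rHom n) '' AC)) : DihedralGroup n) ∈ c1.support :=
          hstay _ p.end_mem_support
        exact (hcross w2 hend w2 c2.start_mem_support).1 rfl
      · exact ⟨⟨w1, hw1⟩, SimpleGraph.Reachable.refl _, liftWalk c1 hsub1,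
          liftWalk_isCycle c1 hc1 hsub1⟩
      · exact ⟨⟨w2, hw2⟩, SimpleGraph.Reachable.refl _, liftWalk c2 hsub2,
          liftWalk_isCycle c2 hc2 hsub2⟩
    rw [sep_iff_exists_set]
    exact ⟨AC, witness_transfer (isoInduce (rHom n) rHom_injective AC).symm hwitness⟩
  · intro hsep
    rw [sep_iff_exists_set] at hsep ⊢
    obtain ⟨A, hw⟩ := hsep
    exact ⟨(rHom n) '' A, witness_transfer (isoInduce (rHom n) rHom_injective A) hw⟩

end P2sec


/-- The power graph of D_{2n} is cyclically separable iff that of C_n is;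
equivalently iff n has at least two prime factors, n ≠ p₁p₂ with p₁ ≤ 3,
and n ≠ 12. -/
theorem stmt16 (n : ℕ) [NeZero n] (hn : 3 ≤ n) :
    (CyclicallySeparable (powerGraph (DihedralGroup n)) ↔
      CyclicallySeparable (powerGraph (Multiplicative (ZMod n)))) ∧
    (CyclicallySeparable (powerGraph (DihedralGroup n)) ↔
      (2 ≤ n.primeFactors.card ∧
       (¬ ∃ p q : ℕ, p.Prime ∧ q.Prime ∧ p < q ∧ p ≤ 3 ∧ n = p * q) ∧
       n ≠ 12)) :=
  ⟨P2 n, (P2 n).trans (P1 n hn)⟩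
end
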